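/- arXiv:2506.18338 — 8 statements merged into one kernel-verified Lean document; each statement's English description precedes it below -/
import Mathlib

section
/- Let (j1,j2,j3) be an admissible triple and let a,b ∈ {−1,+1}. Then K_{a,b}(j1,j2,j3) ≠ 0 if and only if the triple (j1+a, j2+b, j3) is admissible (in particular K_{a,b}(j1,j2,j3) = 0 whenever j1+a < 0 or j2+b < 0). -/
/-- A triple of integers is *admissible* if all entries are nonnegative,
the triangle inequality `|j1 - j2| ≤ j3 ≤ j1 + j2` holds, and `j1+j2+j3` is even. -/
def Admissible (j : ℤ × ℤ × ℤ) : Prop :=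
  0 ≤ j.1 ∧ 0 ≤ j.2.1 ∧ 0 ≤ j.2.2 ∧
  |j.1 - j.2.1| ≤ j.2.2 ∧ j.2.2 ≤ j.1 + j.2.1 ∧ 2 ∣ (j.1 + j.2.1 + j.2.2)

/-- The Pieri coefficient
`K_{a,b}(j1,j2,j3) = a·b·(a·j1+b·j2+j3+a+b+2)·(a·j1+b·j2−j3+a+b) / (4·(j1+1)·(j2+1))`
as a rational number. -/
def Kq (a b j1 j2 j3 : ℤ) : ℚ :=
  ((a * b : ℤ) : ℚ) *
    (((a*j1 + b*j2 + j3 + a + b + 2 : ℤ) : ℚ) * ((a*j1 + b*j2 - j3 + a + b : ℤ) : ℚ)) /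
    (4 * ((j1 : ℚ) + 1) * ((j2 : ℚ) + 1))

/-- For an admissible triple `(j1,j2,j3)` and `a, b ∈ {−1,+1}`,
the coefficient `K_{a,b}(j1,j2,j3)` is nonzero if and only if the triple
`(j1+a, j2+b, j3)` is admissible. -/
theorem K_ne_zero_iff_admissible (a b j1 j2 j3 : ℤ)
    (ha : a = 1 ∨ a = -1) (hb : b = 1 ∨ b = -1)
    (hadm : Admissible (j1, j2, j3)) :
    Kq a b j1 j2 j3 ≠ 0 ↔ Admissible (j1 + a, j2 + b, j3) := by
  obtain ⟨h1, h2, h3, h4, h5, h6⟩ := hadm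
  simp only at h1 h2 h3 h4 h5 h6
  rw [abs_le] at h4
  have hd1 : ((j1 : ℚ) + 1) ≠ 0 := by
    have : (0:ℚ) ≤ (j1:ℚ) := by exact_mod_cast h1
    linarith
  have hd2 : ((j2 : ℚ) + 1) ≠ 0 := by
    have : (0:ℚ) ≤ (j2:ℚ) := by exact_mod_cast h2
    linarith
  have hab : a * b ≠ 0 := by rcases ha with rfl|rfl <;> rcases hb with rfl|rfl <;> norm_num
  have hK : Kq a b j1 j2 j3 ≠ 0 ↔
      (a*j1 + b*j2 + j3 + a + b + 2 ≠ 0 ∧ a*j1 + b*j2 - j3 + a + b ≠ 0) := by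
    simp only [Kq, ne_eq, div_eq_zero_iff, mul_eq_zero, Int.cast_eq_zero, hab, hd1, hd2,
      false_or, or_false]
    norm_num
  rw [hK]
  simp only [Admissible, abs_le]
  rcases ha with rfl|rfl <;> rcases hb with rfl|rfl <;>
    constructor <;> intro h <;>
    · omega
end

section
/- Let (φ_{j1,j2,j3}) be a family satisfying the genus-two Pieri rule with φ_{0,0,0} = 1. Then for every admissible triple (j1,j2,j3) and every permutation σ of {1,2,3}, the Laurent polynomial φ_{j1,j2,j3}(x12, x13, x23) equals φ_{j_{σ(1)}, j_{σ(2)}, j_{σ(3)}}(x_{σ(1)σ(2)}, x_{σ(1)σ(3)}, x_{σ(2)σ(3)}), where x_{ji} denotes x_{ij} when i < j; i.e. the family is symmetric under simultaneous permutations of the indices (j1,j2,j3) and of the variables (x12,x13,x23). -/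
/-- Pieri coefficient `K_{a,b}(j1,j2,j3)` as a complex number. -/
noncomputable def Kc (a b j1 j2 j3 : ℤ) : ℂ :=
  ((a * b : ℤ) : ℂ) *
    (((a*j1 + b*j2 + j3 + a + b + 2 : ℤ) : ℂ) * ((a*j1 + b*j2 - j3 + a + b : ℤ) : ℂ)) /
    (4 * ((j1 : ℂ) + 1) * ((j2 : ℂ) + 1))

/-- Laurent polynomials in three variables, as finitely supported
coefficient functions on the exponent lattice `ℤ³`.  The coordinates of a
monomial `m` are the exponents of `x12`, `x13`, `x23` respectively. -/
abbrev LP := (ℤ × ℤ × ℤ) →₀ ℂ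

/-- Multiplication of a Laurent polynomial by the monomial `x^e`. -/
noncomputable def shiftLP (e : ℤ × ℤ × ℤ) (p : LP) : LP :=
  Finsupp.mapDomain (fun m => e + m) p

/-- Membership in `H`: invariance under each inversion `x_{ij} ↦ x_{ij}⁻¹`. -/
def InvariantH (p : LP) : Prop :=
  (∀ m : ℤ × ℤ × ℤ, p (-m.1, m.2.1, m.2.2) = p m) ∧
  (∀ m : ℤ × ℤ × ℤ, p (m.1, -m.2.1, m.2.2) = p m) ∧
  (∀ m : ℤ × ℤ × ℤ, p (m.1, m.2.1, -m.2.2) = p m)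

/-- A family `φ` (defined for all integer triples, vanishing on non-admissible ones,
with values in `H`) satisfies the genus-two Pieri rule with `φ_{0,0,0} = 1`. -/
structure IsPieriFamily (φ : ℤ × ℤ × ℤ → LP) : Prop where
  zero_of_not_admissible : ∀ j, ¬ Admissible j → φ j = 0
  mem_H : ∀ j, InvariantH (φ j)
  init : φ (0, 0, 0) = Finsupp.single (0, 0, 0) 1
  pieri12 : ∀ j1 j2 j3 : ℤ, Admissible (j1, j2, j3) →
    shiftLP (1, 0, 0) (φ (j1, j2, j3)) + shiftLP (-1, 0, 0) (φ (j1, j2, j3)) =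
      Kc 1 1 j1 j2 j3 • φ (j1+1, j2+1, j3) + Kc 1 (-1) j1 j2 j3 • φ (j1+1, j2-1, j3) +
      Kc (-1) 1 j1 j2 j3 • φ (j1-1, j2+1, j3) + Kc (-1) (-1) j1 j2 j3 • φ (j1-1, j2-1, j3)
  pieri13 : ∀ j1 j2 j3 : ℤ, Admissible (j1, j2, j3) →
    shiftLP (0, 1, 0) (φ (j1, j2, j3)) + shiftLP (0, -1, 0) (φ (j1, j2, j3)) =
      Kc 1 1 j1 j3 j2 • φ (j1+1, j2, j3+1) + Kc 1 (-1) j1 j3 j2 • φ (j1+1, j2, j3-1) +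
      Kc (-1) 1 j1 j3 j2 • φ (j1-1, j2, j3+1) + Kc (-1) (-1) j1 j3 j2 • φ (j1-1, j2, j3-1)
  pieri23 : ∀ j1 j2 j3 : ℤ, Admissible (j1, j2, j3) →
    shiftLP (0, 0, 1) (φ (j1, j2, j3)) + shiftLP (0, 0, -1) (φ (j1, j2, j3)) =
      Kc 1 1 j2 j3 j1 • φ (j1, j2+1, j3+1) + Kc 1 (-1) j2 j3 j1 • φ (j1, j2+1, j3-1) +
      Kc (-1) 1 j2 j3 j1 • φ (j1, j2-1, j3+1) + Kc (-1) (-1) j2 j3 j1 • φ (j1, j2-1, j3-1)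

lemma adm_iff (a b c : ℤ) : Admissible (a,b,c) ↔
    (0 ≤ a ∧ 0 ≤ b ∧ 0 ≤ c ∧ b - a ≤ c ∧ a - b ≤ c ∧ c ≤ a + b ∧ 2 ∣ (a+b+c)) := by
  simp only [Admissible, abs_le]; omega

lemma Kc11_ne {j1 j2 j3 : ℤ} (h1 : 0 ≤ j1) (h2 : 0 ≤ j2) (h3 : 0 ≤ j3) (h : j3 ≤ j1 + j2) :
    Kc 1 1 j1 j2 j3 ≠ 0 := by
  unfold Kc
  apply div_ne_zero
  · apply mul_ne_zero
    · norm_num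
    · exact mul_ne_zero (Int.cast_ne_zero.mpr (by omega)) (Int.cast_ne_zero.mpr (by omega))
  · refine mul_ne_zero (mul_ne_zero (by norm_num) ?_) ?_
    · have : ((j1 + 1 : ℤ) : ℂ) ≠ 0 := Int.cast_ne_zero.mpr (by omega)
      push_cast at this; exact this
    · have : ((j2 + 1 : ℤ) : ℂ) ≠ 0 := Int.cast_ne_zero.mpr (by omega)
      push_cast at this; exact this

lemma pieri_unique {φ ψ : ℤ × ℤ × ℤ → LP} (hφ : IsPieriFamily φ) (hψ : IsPieriFamily ψ) :
    φ = ψ := by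
  have key : ∀ N : ℕ, ∀ k1 k2 k3 : ℤ, (k1 + k2 + k3).toNat = N →
      φ (k1, k2, k3) = ψ (k1, k2, k3) := by
    intro N
    induction N using Nat.strong_induction_on with
    | _ N IH =>
      intro k1 k2 k3 hsum
      by_cases hadm : Admissible (k1, k2, k3)
      · rw [adm_iff] at hadm
        have heq : ∀ t1 t2 t3 : ℤ, t1 + t2 + t3 < k1 + k2 + k3 →
            φ (t1, t2, t3) = ψ (t1, t2, t3) := by
          intro t1 t2 t3 ht
          by_cases h : Admissible (t1, t2, t3)
          · have h' := (adm_iff t1 t2 t3).mp h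
            exact IH ((t1 + t2 + t3).toNat) (by omega) t1 t2 t3 rfl
          · rw [hφ.zero_of_not_admissible _ h, hψ.zero_of_not_admissible _ h]
        by_cases h0 : k1 + k2 + k3 = 0
        · have e1 : k1 = 0 := by omega
          have e2 : k2 = 0 := by omega
          have e3 : k3 = 0 := by omega
          subst e1; subst e2; subst e3
          rw [hφ.init, hψ.init]
        · have hc : Admissible (k1-1, k2-1, k3) ∨ Admissible (k1-1, k2, k3-1) ∨
              Admissible (k1, k2-1, k3-1) := by
            rw [adm_iff, adm_iff, adm_iff]; omega
          rcases hc with hA | hA | hA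
          · have hA' := (adm_iff _ _ _).mp hA
            have Hφ := hφ.pieri12 (k1-1) (k2-1) k3 hA
            have Hψ := hψ.pieri12 (k1-1) (k2-1) k3 hA
            rw [show (k1 - 1 + 1 : ℤ) = k1 by ring, show (k2 - 1 + 1 : ℤ) = k2 by ring,
              show (k1 - 1 - 1 : ℤ) = k1 - 2 by ring, show (k2 - 1 - 1 : ℤ) = k2 - 2 by ring]
              at Hφ Hψ
            rw [heq (k1-1) (k2-1) k3 (by omega), heq k1 (k2-2) k3 (by omega),
              heq (k1-2) k2 k3 (by omega), heq (k1-2) (k2-2) k3 (by omega)] at Hφ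
            have h2 := add_right_cancel (add_right_cancel (add_right_cancel (Hφ.symm.trans Hψ)))
            exact smul_right_injective LP
              (Kc11_ne (by omega) (by omega) (by omega) (by omega)) h2
          · have hA' := (adm_iff _ _ _).mp hA
            have Hφ := hφ.pieri13 (k1-1) k2 (k3-1) hA
            have Hψ := hψ.pieri13 (k1-1) k2 (k3-1) hA
            rw [show (k1 - 1 + 1 : ℤ) = k1 by ring, show (k3 - 1 + 1 : ℤ) = k3 by ring,
              show (k1 - 1 - 1 : ℤ) = k1 - 2 by ring, show (k3 - 1 - 1 : ℤ) = k3 - 2 by ring]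
              at Hφ Hψ
            rw [heq (k1-1) k2 (k3-1) (by omega), heq k1 k2 (k3-2) (by omega),
              heq (k1-2) k2 k3 (by omega), heq (k1-2) k2 (k3-2) (by omega)] at Hφ
            have h2 := add_right_cancel (add_right_cancel (add_right_cancel (Hφ.symm.trans Hψ)))
            exact smul_right_injective LP
              (Kc11_ne (by omega) (by omega) (by omega) (by omega)) h2
          · have hA' := (adm_iff _ _ _).mp hA
            have Hφ := hφ.pieri23 k1 (k2-1) (k3-1) hA
            have Hψ := hψ.pieri23 k1 (k2-1) (k3-1) hA
            rw [show (k2 - 1 + 1 : ℤ) = k2 by ring, show (k3 - 1 + 1 : ℤ) = k3 by ring,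
              show (k2 - 1 - 1 : ℤ) = k2 - 2 by ring, show (k3 - 1 - 1 : ℤ) = k3 - 2 by ring]
              at Hφ Hψ
            rw [heq k1 (k2-1) (k3-1) (by omega), heq k1 k2 (k3-2) (by omega),
              heq k1 (k2-2) k3 (by omega), heq k1 (k2-2) (k3-2) (by omega)] at Hφ
            have h2 := add_right_cancel (add_right_cancel (add_right_cancel (Hφ.symm.trans Hψ)))
            exact smul_right_injective LP
              (Kc11_ne (by omega) (by omega) (by omega) (by omega)) h2
      · rw [hφ.zero_of_not_admissible _ hadm, hψ.zero_of_not_admissible _ hadm]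
  funext k
  obtain ⟨k1, k2, k3⟩ := k
  exact key _ k1 k2 k3 rfl

lemma Kc_symm (a b j1 j2 j3 : ℤ) : Kc a b j1 j2 j3 = Kc b a j2 j1 j3 := by
  unfold Kc
  push_cast
  ring

lemma shiftLP_apply (e : ℤ × ℤ × ℤ) (p : LP) (x : ℤ × ℤ × ℤ) :
    shiftLP e p x = p (x - e) := by
  conv_lhs => rw [show x = e + (x - e) by abel]
  exact Finsupp.mapDomain_apply (add_right_injective e) p _

def eA : (ℤ × ℤ × ℤ) ≃ (ℤ × ℤ × ℤ) where
  toFun m := (m.1, m.2.2, m.2.1)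
  invFun m := (m.1, m.2.2, m.2.1)
  left_inv m := rfl
  right_inv m := rfl

def eB : (ℤ × ℤ × ℤ) ≃ (ℤ × ℤ × ℤ) where
  toFun m := (m.2.1, m.1, m.2.2)
  invFun m := (m.2.1, m.1, m.2.2)
  left_inv m := rfl
  right_inv m := rfl

noncomputable def psiA (φ : ℤ × ℤ × ℤ → LP) : ℤ × ℤ × ℤ → LP :=
  fun k => Finsupp.equivMapDomain eA (φ (k.2.1, k.1, k.2.2))

noncomputable def psiB (φ : ℤ × ℤ × ℤ → LP) : ℤ × ℤ × ℤ → LP :=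
  fun k => Finsupp.equivMapDomain eB (φ (k.1, k.2.2, k.2.1))

lemma psiA_apply (φ : ℤ × ℤ × ℤ → LP) (k x : ℤ × ℤ × ℤ) :
    psiA φ k x = φ (k.2.1, k.1, k.2.2) (x.1, x.2.2, x.2.1) := rfl

lemma psiB_apply (φ : ℤ × ℤ × ℤ → LP) (k x : ℤ × ℤ × ℤ) :
    psiB φ k x = φ (k.1, k.2.2, k.2.1) (x.2.1, x.1, x.2.2) := rfl

lemma psiA_family {φ : ℤ × ℤ × ℤ → LP} (hφ : IsPieriFamily φ) : IsPieriFamily (psiA φ) := by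
  constructor
  · rintro ⟨k1, k2, k3⟩ h
    have h' : ¬ Admissible (k2, k1, k3) := by
      rw [adm_iff] at h ⊢; omega
    ext x
    simp [psiA_apply, hφ.zero_of_not_admissible _ h']
  · rintro ⟨k1, k2, k3⟩
    obtain ⟨i1, i2, i3⟩ := hφ.mem_H (k2, k1, k3)
    refine ⟨fun m => ?_, fun m => ?_, fun m => ?_⟩
    · exact i1 (m.1, m.2.2, m.2.1)
    · exact i3 (m.1, m.2.2, m.2.1)
    · exact i2 (m.1, m.2.2, m.2.1)
  · show Finsupp.equivMapDomain eA (φ (0,0,0)) = _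
    rw [hφ.init, Finsupp.equivMapDomain_single]
    rfl
  · intro j1 j2 j3 hadm
    have hadm' : Admissible (j2, j1, j3) := by rw [adm_iff] at hadm ⊢; omega
    have H := hφ.pieri12 j2 j1 j3 hadm'
    ext ⟨x1, x2, x3⟩
    have H' := DFunLike.congr_fun H (x1, x3, x2)
    simp only [Finsupp.add_apply, Finsupp.coe_add, Pi.add_apply, Finsupp.coe_smul,
      Finsupp.smul_apply, smul_eq_mul, shiftLP_apply, psiA_apply, Prod.mk_sub_mk,
      sub_zero, sub_neg_eq_add] at H' ⊢
    rw [Kc_symm 1 1 j1 j2 j3, Kc_symm 1 (-1) j1 j2 j3, Kc_symm (-1) 1 j1 j2 j3,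
      Kc_symm (-1) (-1) j1 j2 j3]
    linear_combination H'
  · intro j1 j2 j3 hadm
    have hadm' : Admissible (j2, j1, j3) := by rw [adm_iff] at hadm ⊢; omega
    have H := hφ.pieri23 j2 j1 j3 hadm'
    ext ⟨x1, x2, x3⟩
    have H' := DFunLike.congr_fun H (x1, x3, x2)
    simp only [Finsupp.add_apply, Finsupp.coe_add, Pi.add_apply, Finsupp.coe_smul,
      Finsupp.smul_apply, smul_eq_mul, shiftLP_apply, psiA_apply, Prod.mk_sub_mk,
      sub_zero, sub_neg_eq_add] at H' ⊢
    linear_combination H'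
  · intro j1 j2 j3 hadm
    have hadm' : Admissible (j2, j1, j3) := by rw [adm_iff] at hadm ⊢; omega
    have H := hφ.pieri13 j2 j1 j3 hadm'
    ext ⟨x1, x2, x3⟩
    have H' := DFunLike.congr_fun H (x1, x3, x2)
    simp only [Finsupp.add_apply, Finsupp.coe_add, Pi.add_apply, Finsupp.coe_smul,
      Finsupp.smul_apply, smul_eq_mul, shiftLP_apply, psiA_apply, Prod.mk_sub_mk,
      sub_zero, sub_neg_eq_add] at H' ⊢
    linear_combination H'

lemma psiB_family {φ : ℤ × ℤ × ℤ → LP} (hφ : IsPieriFamily φ) : IsPieriFamily (psiB φ) := by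
  constructor
  · rintro ⟨k1, k2, k3⟩ h
    have h' : ¬ Admissible (k1, k3, k2) := by
      rw [adm_iff] at h ⊢; omega
    ext x
    simp [psiB_apply, hφ.zero_of_not_admissible _ h']
  · rintro ⟨k1, k2, k3⟩
    obtain ⟨i1, i2, i3⟩ := hφ.mem_H (k1, k3, k2)
    refine ⟨fun m => ?_, fun m => ?_, fun m => ?_⟩
    · exact i2 (m.2.1, m.1, m.2.2)
    · exact i1 (m.2.1, m.1, m.2.2)
    · exact i3 (m.2.1, m.1, m.2.2)
  · show Finsupp.equivMapDomain eB (φ (0,0,0)) = _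
    rw [hφ.init, Finsupp.equivMapDomain_single]
    rfl
  · intro j1 j2 j3 hadm
    have hadm' : Admissible (j1, j3, j2) := by rw [adm_iff] at hadm ⊢; omega
    have H := hφ.pieri13 j1 j3 j2 hadm'
    ext ⟨x1, x2, x3⟩
    have H' := DFunLike.congr_fun H (x2, x1, x3)
    simp only [Finsupp.add_apply, Finsupp.coe_add, Pi.add_apply, Finsupp.coe_smul,
      Finsupp.smul_apply, smul_eq_mul, shiftLP_apply, psiB_apply, Prod.mk_sub_mk,
      sub_zero, sub_neg_eq_add] at H' ⊢
    linear_combination H'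
  · intro j1 j2 j3 hadm
    have hadm' : Admissible (j1, j3, j2) := by rw [adm_iff] at hadm ⊢; omega
    have H := hφ.pieri12 j1 j3 j2 hadm'
    ext ⟨x1, x2, x3⟩
    have H' := DFunLike.congr_fun H (x2, x1, x3)
    simp only [Finsupp.add_apply, Finsupp.coe_add, Pi.add_apply, Finsupp.coe_smul,
      Finsupp.smul_apply, smul_eq_mul, shiftLP_apply, psiB_apply, Prod.mk_sub_mk,
      sub_zero, sub_neg_eq_add] at H' ⊢
    linear_combination H'
  · intro j1 j2 j3 hadm
    have hadm' : Admissible (j1, j3, j2) := by rw [adm_iff] at hadm ⊢; omega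
    have H := hφ.pieri23 j1 j3 j2 hadm'
    ext ⟨x1, x2, x3⟩
    have H' := DFunLike.congr_fun H (x2, x1, x3)
    simp only [Finsupp.add_apply, Finsupp.coe_add, Pi.add_apply, Finsupp.coe_smul,
      Finsupp.smul_apply, smul_eq_mul, shiftLP_apply, psiB_apply, Prod.mk_sub_mk,
      sub_zero, sub_neg_eq_add] at H' ⊢
    rw [Kc_symm 1 1 j2 j3 j1, Kc_symm 1 (-1) j2 j3 j1, Kc_symm (-1) 1 j2 j3 j1,
      Kc_symm (-1) (-1) j2 j3 j1]
    linear_combination H'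

lemma phi_swapA {φ : ℤ × ℤ × ℤ → LP} (hφ : IsPieriFamily φ) (k1 k2 k3 x1 x2 x3 : ℤ) :
    φ (k2, k1, k3) (x1, x3, x2) = φ (k1, k2, k3) (x1, x2, x3) := by
  have h := pieri_unique (psiA_family hφ) hφ
  have := DFunLike.congr_fun (congrFun h (k1, k2, k3)) (x1, x2, x3)
  simpa [psiA_apply] using this

lemma phi_swapB {φ : ℤ × ℤ × ℤ → LP} (hφ : IsPieriFamily φ) (k1 k2 k3 x1 x2 x3 : ℤ) :
    φ (k1, k3, k2) (x2, x1, x3) = φ (k1, k2, k3) (x1, x2, x3) := by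
  have h := pieri_unique (psiB_family hφ) hφ
  have := DFunLike.congr_fun (congrFun h (k1, k2, k3)) (x1, x2, x3)
  simpa [psiB_apply] using this

/-- A family satisfying the genus-two Pieri rule with `φ_{0,0,0} = 1`
is symmetric under simultaneous permutations of the indices `(j1,j2,j3)` and of the
variables `(x12,x13,x23)`.  Here a triple of exponents is recorded as the function
`n : Fin 3 → ℤ` where `n k` is the exponent of the variable `x_{ab}` with
`{a,b,k} = {0,1,2}` (so the coefficient of `φ_{j1,j2,j3}` on
`x12^{m12} x13^{m13} x23^{m23}` is the value at `(m12, m13, m23) = (n 2, n 1, n 0)`),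
and a permutation `σ` relabels both the indices and the variables. -/
theorem genus_two_pieri_symmetry (φ : ℤ × ℤ × ℤ → LP) (hφ : IsPieriFamily φ)
    (σ : Equiv.Perm (Fin 3)) (j n : Fin 3 → ℤ) (hadm : Admissible (j 0, j 1, j 2)) :
    φ (j 0, j 1, j 2) (n 2, n 1, n 0) =
      φ (j (σ 0), j (σ 1), j (σ 2)) (n (σ 2), n (σ 1), n (σ 0)) := by
  let P : Equiv.Perm (Fin 3) → Prop := fun τ => ∀ j n : Fin 3 → ℤ,
    φ (j (τ 0), j (τ 1), j (τ 2)) (n (τ 2), n (τ 1), n (τ 0)) = φ (j 0, j 1, j 2) (n 2, n 1, n 0)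
  have P1 : P 1 := fun j n => rfl
  have Pmul : ∀ σ τ, P σ → P τ → P (σ * τ) := by
    intro σ τ hσ hτ j n
    have h1 := hτ (fun x => j (σ x)) (fun x => n (σ x))
    have h2 := hσ j n
    simpa [Equiv.Perm.mul_apply] using h1.trans h2
  have Pswap01 : P (Equiv.swap 0 1) := by
    intro j n
    rw [Equiv.swap_apply_left, Equiv.swap_apply_right,
      Equiv.swap_apply_of_ne_of_ne (by decide) (by decide)]
    exact phi_swapA hφ (j 0) (j 1) (j 2) (n 2) (n 1) (n 0)
  have Pswap12 : P (Equiv.swap 1 2) := by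
    intro j n
    rw [Equiv.swap_apply_left, Equiv.swap_apply_right,
      Equiv.swap_apply_of_ne_of_ne (by decide) (by decide)]
    exact phi_swapB hφ (j 0) (j 1) (j 2) (n 2) (n 1) (n 0)
  have Pswap02 : P (Equiv.swap 0 2) := by
    have e : (Equiv.swap (0 : Fin 3) 2) = Equiv.swap 0 1 * Equiv.swap 1 2 * Equiv.swap 0 1 := by
      decide
    rw [e]
    exact Pmul _ _ (Pmul _ _ Pswap01 Pswap12) Pswap01
  have Pswap : ∀ x y : Fin 3, x ≠ y → P (Equiv.swap x y) := by
    intro x y hxy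
    fin_cases x <;> fin_cases y <;>
      first
        | exact absurd rfl hxy
        | exact Pswap01
        | exact Pswap12
        | exact Pswap02
        | (rw [Equiv.swap_comm]; first | exact Pswap01 | exact Pswap12 | exact Pswap02)
  have hP : P σ :=
    Equiv.Perm.swap_induction_on σ P1 (fun f x y hxy hf => Pmul _ _ (Pswap x y hxy) hf)
  exact (hP j n).symm
end

section
/- Let (φ_{j1,j2,j3}) be a family satisfying the genus-two Pieri rule with φ_{0,0,0} = 1. Then for every admissible triple (j1,j2,j3), the evaluation of the Laurent polynomial φ_{j1,j2,j3} at x12 = x13 = x23 = 1 equals 1. -/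
section PieriAux

lemma adm_iff_s4 (x y z : ℤ) : Admissible (x, y, z) ↔
    (0 ≤ x ∧ 0 ≤ y ∧ 0 ≤ z ∧ x ≤ y + z ∧ y ≤ x + z ∧ z ≤ x + y ∧ 2 ∣ (x + y + z)) := by
  simp only [Admissible, abs_le]; omega

lemma adm_perm132 (a b c : ℤ) : Admissible (a, c, b) ↔ Admissible (a, b, c) := by
  rw [adm_iff_s4, adm_iff_s4]; omega

lemma adm_perm231 (a b c : ℤ) : Admissible (b, c, a) ↔ Admissible (a, b, c) := by
  rw [adm_iff_s4, adm_iff_s4]; omega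

noncomputable def Ssum (p : LP) : ℂ := p.sum fun _ c => c

lemma Ssum_add (p q : LP) : Ssum (p + q) = Ssum p + Ssum q :=
  Finsupp.sum_add_index' (fun _ => rfl) (fun _ _ _ => rfl)

lemma Ssum_smul (c : ℂ) (p : LP) : Ssum (c • p) = c * Ssum p := by
  unfold Ssum
  rw [Finsupp.sum_smul_index (fun _ => rfl), Finsupp.mul_sum]

lemma Ssum_shift (e : ℤ × ℤ × ℤ) (p : LP) : Ssum (shiftLP e p) = Ssum p := by
  unfold Ssum shiftLP
  exact Finsupp.sum_mapDomain_index (fun _ => rfl) (fun _ _ _ => rfl)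

lemma cast_succ_ne {p : ℤ} (hp : 0 ≤ p) : ((p : ℂ) + 1) ≠ 0 := by
  have h : (p:ℂ) + 1 = ((p + 1 : ℤ) : ℂ) := by push_cast; ring
  rw [h]
  exact Int.cast_ne_zero.mpr (by omega)

lemma Kc_sum (p q r : ℤ) (hp : 0 ≤ p) (hq : 0 ≤ q) :
    Kc 1 1 p q r + Kc 1 (-1) p q r + Kc (-1) 1 p q r + Kc (-1) (-1) p q r = 2 := by
  have h1 := cast_succ_ne hp
  have h2 := cast_succ_ne hq
  unfold Kc
  push_cast
  field_simp
  ring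

lemma Kc_zero_of_factor2 {a b j1 j2 j3 : ℤ} (h : a*j1 + b*j2 - j3 + a + b = 0) :
    Kc a b j1 j2 j3 = 0 := by
  unfold Kc; rw [h]; simp

lemma Kc_zero_of_factor1 {a b j1 j2 j3 : ℤ} (h : a*j1 + b*j2 + j3 + a + b + 2 = 0) :
    Kc a b j1 j2 j3 = 0 := by
  unfold Kc; rw [h]; simp

lemma Kc11_ne_zero {p q r : ℤ} (hp : 0 ≤ p) (hq : 0 ≤ q) (hr : 0 ≤ r) (h : r ≤ p + q) :
    Kc 1 1 p q r ≠ 0 := by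
  unfold Kc
  apply div_ne_zero
  · apply mul_ne_zero
    · norm_num
    · apply mul_ne_zero <;> exact Int.cast_ne_zero.mpr (by omega)
  · exact mul_ne_zero (mul_ne_zero (by norm_num) (cast_succ_ne hp)) (cast_succ_ne hq)

lemma vanish_ud {p q r : ℤ} (h : Admissible (p, q, r)) (h2 : ¬ Admissible (p+1, q-1, r)) :
    Kc 1 (-1) p q r = 0 := by
  rw [adm_iff_s4] at h h2
  exact Kc_zero_of_factor2 (by omega)

lemma vanish_du {p q r : ℤ} (h : Admissible (p, q, r)) (h2 : ¬ Admissible (p-1, q+1, r)) :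
    Kc (-1) 1 p q r = 0 := by
  rw [adm_iff_s4] at h h2
  exact Kc_zero_of_factor2 (by omega)

lemma vanish_dd {p q r : ℤ} (h : Admissible (p, q, r)) (h2 : ¬ Admissible (p-1, q-1, r)) :
    Kc (-1) (-1) p q r = 0 := by
  rw [adm_iff_s4] at h h2
  exact Kc_zero_of_factor1 (by omega)

lemma pieri_step {e1 e2 : ℤ × ℤ × ℤ} {K1 K2 K3 K4 : ℂ} {p A B C D : LP}
    (h : shiftLP e1 p + shiftLP e2 p = K1 • A + K2 • B + K3 • C + K4 • D) :
    K1 * Ssum A + K2 * Ssum B + K3 * Ssum C + K4 * Ssum D = 2 * Ssum p := by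
  have h' := congrArg Ssum h
  simp only [Ssum_add, Ssum_smul, Ssum_shift] at h'
  linear_combination -h'

lemma neighbor_term {K s : ℂ} {X : ℤ × ℤ × ℤ}
    (hK : ¬ Admissible X → K = 0) (hS : Admissible X → s = 1) : K * s = K := by
  by_cases hX : Admissible X
  · rw [hS hX, mul_one]
  · rw [hK hX, zero_mul]

end PieriAux

/-- For a family satisfying the genus-two Pieri rule with
`φ_{0,0,0} = 1`, the evaluation of `φ_{j1,j2,j3}` at `x12 = x13 = x23 = 1`
(i.e. the sum of its coefficients) equals `1`, for every admissible triple. -/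
theorem genus_two_pieri_value_at_one (φ : ℤ × ℤ × ℤ → LP) (hφ : IsPieriFamily φ)
    (j : ℤ × ℤ × ℤ) (hadm : Admissible j) :
    ((φ j).sum fun _ c => c) = 1 := by
  obtain ⟨j1, j2, j3⟩ := j
  suffices H : ∀ n : ℕ, ∀ x y z : ℤ, Admissible (x, y, z) → x + y + z = (n : ℤ) →
      Ssum (φ (x, y, z)) = 1 by
    have h0 := (adm_iff_s4 j1 j2 j3).mp hadm
    exact H (j1 + j2 + j3).toNat j1 j2 j3 hadm (by omega)
  intro n
  induction n using Nat.strong_induction_on with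
  | _ n ih =>
    intro x y z hadm hn
    have hA := (adm_iff_s4 x y z).mp hadm
    rcases Nat.eq_zero_or_pos n with h0 | hpos
    · subst h0
      have hx : x = 0 := by omega
      have hy : y = 0 := by omega
      have hz : z = 0 := by omega
      subst hx; subst hy; subst hz
      rw [hφ.init]
      simp [Ssum]
    · have hcase : (1 ≤ x ∧ 1 ≤ y ∧ z + 2 ≤ x + y) ∨ (1 ≤ x ∧ 1 ≤ z ∧ y + 2 ≤ x + z) ∨
          (1 ≤ y ∧ 1 ≤ z ∧ x + 2 ≤ y + z) := by omega
      rcases hcase with ⟨hx, hy, hz2⟩ | ⟨hx, hz, hy2⟩ | ⟨hy, hz, hx2⟩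
      · -- Case 1: use pieri12 at (x-1, y-1, z)
        have hb : Admissible (x - 1, y - 1, z) := by rw [adm_iff_s4]; omega
        have h12 := hφ.pieri12 (x - 1) (y - 1) z hb
        simp only [show x - 1 + 1 = x from by ring, show y - 1 + 1 = y from by ring,
          show x - 1 - 1 = x - 2 from by ring, show y - 1 - 1 = y - 2 from by ring] at h12
        have hstep := pieri_step h12
        have hbase : Ssum (φ (x - 1, y - 1, z)) = 1 :=
          ih (n - 2) (by omega) (x - 1) (y - 1) z hb (by omega)
        have hB : Kc 1 (-1) (x-1) (y-1) z * Ssum (φ (x, y - 2, z)) = Kc 1 (-1) (x-1) (y-1) z :=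
          neighbor_term
            (fun hX => vanish_ud hb (by
              rw [show x - 1 + 1 = x from by ring, show y - 1 - 1 = y - 2 from by ring]
              exact hX))
            (fun hX => ih (n - 2) (by omega) x (y - 2) z hX
              (by have := (adm_iff_s4 x (y-2) z).mp hX; omega))
        have hC : Kc (-1) 1 (x-1) (y-1) z * Ssum (φ (x - 2, y, z)) = Kc (-1) 1 (x-1) (y-1) z :=
          neighbor_term
            (fun hX => vanish_du hb (by
              rw [show x - 1 - 1 = x - 2 from by ring, show y - 1 + 1 = y from by ring]
              exact hX))
            (fun hX => ih (n - 2) (by omega) (x - 2) y z hX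
              (by have := (adm_iff_s4 (x-2) y z).mp hX; omega))
        have hD : Kc (-1) (-1) (x-1) (y-1) z * Ssum (φ (x - 2, y - 2, z)) =
            Kc (-1) (-1) (x-1) (y-1) z :=
          neighbor_term
            (fun hX => vanish_dd hb (by
              rw [show x - 1 - 1 = x - 2 from by ring, show y - 1 - 1 = y - 2 from by ring]
              exact hX))
            (fun hX => ih (n - 4) (by omega) (x - 2) (y - 2) z hX
              (by have := (adm_iff_s4 (x-2) (y-2) z).mp hX; omega))
        have hsum := Kc_sum (x - 1) (y - 1) z (by omega) (by omega)
        have hne := Kc11_ne_zero (p := x - 1) (q := y - 1) (r := z)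
          (by omega) (by omega) (by omega) (by omega)
        apply mul_left_cancel₀ hne
        rw [mul_one]
        linear_combination hstep - hB - hC - hD + 2 * hbase - hsum
      · -- Case 2: use pieri13 at (x-1, y, z-1)
        have hb : Admissible (x - 1, y, z - 1) := by rw [adm_iff_s4]; omega
        have hb' : Admissible (x - 1, z - 1, y) := (adm_perm132 (x-1) y (z-1)).mpr hb
        have h13 := hφ.pieri13 (x - 1) y (z - 1) hb
        simp only [show x - 1 + 1 = x from by ring, show z - 1 + 1 = z from by ring,
          show x - 1 - 1 = x - 2 from by ring, show z - 1 - 1 = z - 2 from by ring] at h13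
        have hstep := pieri_step h13
        have hbase : Ssum (φ (x - 1, y, z - 1)) = 1 :=
          ih (n - 2) (by omega) (x - 1) y (z - 1) hb (by omega)
        have hB : Kc 1 (-1) (x-1) (z-1) y * Ssum (φ (x, y, z - 2)) = Kc 1 (-1) (x-1) (z-1) y :=
          neighbor_term
            (fun hX => vanish_ud hb' (by
              rw [show x - 1 + 1 = x from by ring, show z - 1 - 1 = z - 2 from by ring,
                adm_perm132 x y (z-2)]
              exact hX))
            (fun hX => ih (n - 2) (by omega) x y (z - 2) hX
              (by have := (adm_iff_s4 x y (z-2)).mp hX; omega))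
        have hC : Kc (-1) 1 (x-1) (z-1) y * Ssum (φ (x - 2, y, z)) = Kc (-1) 1 (x-1) (z-1) y :=
          neighbor_term
            (fun hX => vanish_du hb' (by
              rw [show x - 1 - 1 = x - 2 from by ring, show z - 1 + 1 = z from by ring,
                adm_perm132 (x-2) y z]
              exact hX))
            (fun hX => ih (n - 2) (by omega) (x - 2) y z hX
              (by have := (adm_iff_s4 (x-2) y z).mp hX; omega))
        have hD : Kc (-1) (-1) (x-1) (z-1) y * Ssum (φ (x - 2, y, z - 2)) =
            Kc (-1) (-1) (x-1) (z-1) y :=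
          neighbor_term
            (fun hX => vanish_dd hb' (by
              rw [show x - 1 - 1 = x - 2 from by ring, show z - 1 - 1 = z - 2 from by ring,
                adm_perm132 (x-2) y (z-2)]
              exact hX))
            (fun hX => ih (n - 4) (by omega) (x - 2) y (z - 2) hX
              (by have := (adm_iff_s4 (x-2) y (z-2)).mp hX; omega))
        have hsum := Kc_sum (x - 1) (z - 1) y (by omega) (by omega)
        have hne := Kc11_ne_zero (p := x - 1) (q := z - 1) (r := y)
          (by omega) (by omega) (by omega) (by omega)
        apply mul_left_cancel₀ hne
        rw [mul_one]
        linear_combination hstep - hB - hC - hD + 2 * hbase - hsum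
      · -- Case 3: use pieri23 at (x, y-1, z-1)
        have hb : Admissible (x, y - 1, z - 1) := by rw [adm_iff_s4]; omega
        have hb' : Admissible (y - 1, z - 1, x) := (adm_perm231 x (y-1) (z-1)).mpr hb
        have h23 := hφ.pieri23 x (y - 1) (z - 1) hb
        simp only [show y - 1 + 1 = y from by ring, show z - 1 + 1 = z from by ring,
          show y - 1 - 1 = y - 2 from by ring, show z - 1 - 1 = z - 2 from by ring] at h23
        have hstep := pieri_step h23
        have hbase : Ssum (φ (x, y - 1, z - 1)) = 1 :=
          ih (n - 2) (by omega) x (y - 1) (z - 1) hb (by omega)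
        have hB : Kc 1 (-1) (y-1) (z-1) x * Ssum (φ (x, y, z - 2)) = Kc 1 (-1) (y-1) (z-1) x :=
          neighbor_term
            (fun hX => vanish_ud hb' (by
              rw [show y - 1 + 1 = y from by ring, show z - 1 - 1 = z - 2 from by ring,
                adm_perm231 x y (z-2)]
              exact hX))
            (fun hX => ih (n - 2) (by omega) x y (z - 2) hX
              (by have := (adm_iff_s4 x y (z-2)).mp hX; omega))
        have hC : Kc (-1) 1 (y-1) (z-1) x * Ssum (φ (x, y - 2, z)) = Kc (-1) 1 (y-1) (z-1) x :=
          neighbor_term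
            (fun hX => vanish_du hb' (by
              rw [show y - 1 - 1 = y - 2 from by ring, show z - 1 + 1 = z from by ring,
                adm_perm231 x (y-2) z]
              exact hX))
            (fun hX => ih (n - 2) (by omega) x (y - 2) z hX
              (by have := (adm_iff_s4 x (y-2) z).mp hX; omega))
        have hD : Kc (-1) (-1) (y-1) (z-1) x * Ssum (φ (x, y - 2, z - 2)) =
            Kc (-1) (-1) (y-1) (z-1) x :=
          neighbor_term
            (fun hX => vanish_dd hb' (by
              rw [show y - 1 - 1 = y - 2 from by ring, show z - 1 - 1 = z - 2 from by ring,
                adm_perm231 x (y-2) (z-2)]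
              exact hX))
            (fun hX => ih (n - 4) (by omega) x (y - 2) (z - 2) hX
              (by have := (adm_iff_s4 x (y-2) (z-2)).mp hX; omega))
        have hsum := Kc_sum (y - 1) (z - 1) x (by omega) (by omega)
        have hne := Kc11_ne_zero (p := y - 1) (q := z - 1) (r := x)
          (by omega) (by omega) (by omega) (by omega)
        apply mul_left_cancel₀ hne
        rw [mul_one]
        linear_combination hstep - hB - hC - hD + 2 * hbase - hsum
end

section
/- Let Λ1, Λ2, Λ3 ∈ ℂ satisfy |Λ1·Λ2| < 1, |Λ1·Λ3| < 1 and |Λ2·Λ3| < 1. Then the family (Λ1^{j1}·Λ2^{j2}·Λ3^{j3})_{(j1,j2,j3)∈J}, indexed by admissible triples, is absolutely summable and Σ_{(j1,j2,j3)∈J} Λ1^{j1}·Λ2^{j2}·Λ3^{j3} = 1 / ((1 − Λ1Λ2)·(1 − Λ1Λ3)·(1 − Λ2Λ3)). -/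
/-- Bijection between `ℕ³` and the admissible triples, via
`(a,b,c) ↦ (a+b, a+c, b+c)`. -/
def admEquiv : (ℕ × ℕ × ℕ) ≃ {j : ℤ × ℤ × ℤ // Admissible j} where
  toFun p := ⟨((p.1 + p.2.1 : ℤ), (p.1 + p.2.2 : ℤ), (p.2.1 + p.2.2 : ℤ)), by
    unfold Admissible
    dsimp only
    refine ⟨by positivity, by positivity, by positivity, ?_, by omega, by omega⟩
    rw [abs_le]; omega⟩
  invFun j := (((j.1.1 + j.1.2.1 - j.1.2.2) / 2).toNat,
    ((j.1.1 + j.1.2.2 - j.1.2.1) / 2).toNat,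
    ((j.1.2.1 + j.1.2.2 - j.1.1) / 2).toNat)
  left_inv p := by
    obtain ⟨a, b, c⟩ := p
    simp only
    refine Prod.ext ?_ (Prod.ext ?_ ?_) <;> simp <;> omega
  right_inv j := by
    obtain ⟨⟨j1, j2, j3⟩, h1, h2, h3, h4, h5, h6⟩ := j
    dsimp only at h1 h2 h3 h4 h5 h6
    rw [abs_le] at h4
    apply Subtype.ext
    refine Prod.ext ?_ (Prod.ext ?_ ?_) <;> simp <;> omega

/-- For `Λ1, Λ2, Λ3 ∈ ℂ` with `|Λ1Λ2| < 1`, `|Λ1Λ3| < 1`,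
`|Λ2Λ3| < 1`, the family `(Λ1^{j1} Λ2^{j2} Λ3^{j3})` indexed by admissible
triples is absolutely summable and its sum is
`1/((1 − Λ1Λ2)(1 − Λ1Λ3)(1 − Λ2Λ3))`. -/
theorem sum_over_admissible_triples (Λ1 Λ2 Λ3 : ℂ)
    (h12 : ‖Λ1 * Λ2‖ < 1) (h13 : ‖Λ1 * Λ3‖ < 1) (h23 : ‖Λ2 * Λ3‖ < 1) :
    Summable (fun j : {j : ℤ × ℤ × ℤ // Admissible j} =>
      ‖Λ1 ^ j.1.1 * Λ2 ^ j.1.2.1 * Λ3 ^ j.1.2.2‖) ∧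
    ∑' j : {j : ℤ × ℤ × ℤ // Admissible j},
        Λ1 ^ j.1.1 * Λ2 ^ j.1.2.1 * Λ3 ^ j.1.2.2 =
      1 / ((1 - Λ1 * Λ2) * (1 - Λ1 * Λ3) * (1 - Λ2 * Λ3)) := by
  have hfun : ∀ p : ℕ × ℕ × ℕ,
      Λ1 ^ ((admEquiv p : ℤ × ℤ × ℤ).1) * Λ2 ^ ((admEquiv p : ℤ × ℤ × ℤ).2.1) *
        Λ3 ^ ((admEquiv p : ℤ × ℤ × ℤ).2.2)
      = (Λ1 * Λ2) ^ p.1 * ((Λ1 * Λ3) ^ p.2.1 * (Λ2 * Λ3) ^ p.2.2) := by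
    intro ⟨a, b, c⟩
    simp only [admEquiv, Equiv.coe_fn_mk]
    have e1 : ((a : ℤ) + b) = ((a + b : ℕ) : ℤ) := by push_cast; ring
    have e2 : ((a : ℤ) + c) = ((a + c : ℕ) : ℤ) := by push_cast; ring
    have e3 : ((b : ℤ) + c) = ((b + c : ℕ) : ℤ) := by push_cast; ring
    rw [e1, e2, e3, zpow_natCast, zpow_natCast, zpow_natCast]
    simp only [pow_add, mul_pow]
    ring
  have hx : Summable fun n : ℕ => ‖(Λ1 * Λ2) ^ n‖ := by
    simpa [norm_pow] using summable_geometric_of_lt_one (norm_nonneg (Λ1 * Λ2)) h12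
  have hy : Summable fun n : ℕ => ‖(Λ1 * Λ3) ^ n‖ := by
    simpa [norm_pow] using summable_geometric_of_lt_one (norm_nonneg (Λ1 * Λ3)) h13
  have hz : Summable fun n : ℕ => ‖(Λ2 * Λ3) ^ n‖ := by
    simpa [norm_pow] using summable_geometric_of_lt_one (norm_nonneg (Λ2 * Λ3)) h23
  have hyz : Summable fun q : ℕ × ℕ => ‖(Λ1 * Λ3) ^ q.1 * (Λ2 * Λ3) ^ q.2‖ :=
    hy.mul_norm hz
  have hall : Summable fun p : ℕ × ℕ × ℕ =>
      ‖(Λ1 * Λ2) ^ p.1 * ((Λ1 * Λ3) ^ p.2.1 * (Λ2 * Λ3) ^ p.2.2)‖ :=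
    Summable.mul_norm (f := fun n : ℕ => (Λ1 * Λ2) ^ n)
      (g := fun q : ℕ × ℕ => (Λ1 * Λ3) ^ q.1 * (Λ2 * Λ3) ^ q.2) hx hyz
  have hsub : Summable (fun j : {j : ℤ × ℤ × ℤ // Admissible j} =>
      ‖Λ1 ^ j.1.1 * Λ2 ^ j.1.2.1 * Λ3 ^ j.1.2.2‖) := by
    rw [← admEquiv.summable_iff]
    refine hall.congr fun p => ?_
    simp only [Function.comp]
    rw [hfun p]
  refine ⟨hsub, ?_⟩
  have h12' : Λ1 * Λ2 ≠ 1 := fun h => by simp [h] at h12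
  have h13' : Λ1 * Λ3 ≠ 1 := fun h => by simp [h] at h13
  have h23' : Λ2 * Λ3 ≠ 1 := fun h => by simp [h] at h23
  rw [← admEquiv.tsum_eq]
  calc ∑' p : ℕ × ℕ × ℕ, Λ1 ^ ((admEquiv p : ℤ × ℤ × ℤ).1) *
          Λ2 ^ ((admEquiv p : ℤ × ℤ × ℤ).2.1) * Λ3 ^ ((admEquiv p : ℤ × ℤ × ℤ).2.2)
      = ∑' p : ℕ × ℕ × ℕ, (Λ1 * Λ2) ^ p.1 * ((Λ1 * Λ3) ^ p.2.1 * (Λ2 * Λ3) ^ p.2.2) :=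
        tsum_congr hfun
    _ = (∑' a : ℕ, (Λ1 * Λ2) ^ a) * ∑' q : ℕ × ℕ, (Λ1 * Λ3) ^ q.1 * (Λ2 * Λ3) ^ q.2 :=
        (tsum_mul_tsum_of_summable_norm (f := fun n : ℕ => (Λ1 * Λ2) ^ n)
          (g := fun q : ℕ × ℕ => (Λ1 * Λ3) ^ q.1 * (Λ2 * Λ3) ^ q.2) hx hyz).symm
    _ = (∑' a : ℕ, (Λ1 * Λ2) ^ a) * ((∑' b : ℕ, (Λ1 * Λ3) ^ b) * ∑' c : ℕ, (Λ2 * Λ3) ^ c) := by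
        rw [tsum_mul_tsum_of_summable_norm hy hz]
    _ = 1 / ((1 - Λ1 * Λ2) * (1 - Λ1 * Λ3) * (1 - Λ2 * Λ3)) := by
        rw [tsum_geometric_of_norm_lt_one h12, tsum_geometric_of_norm_lt_one h13,
          tsum_geometric_of_norm_lt_one h23]
        field_simp
end

section
/- Let j1 ≥ j2 ≥ 0 be integers. Then for all integers a,b with 0 ≤ a ≤ j2 and 0 ≤ b ≤ j1−j2, the coefficients c_{a,b} satisfy the recursion (a+b)·(2·j1 − a − b + 2)·c_{a,b} + 4·(j2−a+2)·(j2−a+1)·c_{a−2,b} + 8·(j2−a+1)·(j1−j2−b+1)·c_{a−1,b−1} + 4·(j1−j2−b+2)·(j1−j2−b+1)·c_{a,b−2} = 0. -/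
set_option maxHeartbeats 1000000
/-- Factorial of an integer (meant for nonnegative arguments), as a rational. -/
def zfact (n : ℤ) : ℚ := (Nat.factorial n.toNat : ℚ)

lemma zfact_pos (n : ℤ) : 0 < zfact n := by
  simp [zfact, Nat.factorial_pos]

lemma zfact_ne_zero (n : ℤ) : zfact n ≠ 0 := (zfact_pos n).ne'

lemma zfact_succ (n : ℤ) (h : 0 ≤ n) : zfact (n + 1) = (n + 1) * zfact n := by
  lift n to ℕ using h
  have : ((n : ℤ) + 1).toNat = n + 1 := by omega
  rw [zfact, zfact, this, Nat.factorial_succ, Int.toNat_natCast]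
  push_cast
  ring

lemma zfact_eq (n : ℤ) (h : 1 ≤ n) : zfact n = n * zfact (n - 1) := by
  have := zfact_succ (n - 1) (by omega)
  simpa using this

lemma neg_one_zpow_pred (m : ℤ) : (-1 : ℚ) ^ m = -(-1 : ℚ) ^ (m - 1) := by
  rw [show m = (m-1)+1 by ring, zpow_add_one₀ (by norm_num : (-1:ℚ) ≠ 0)]
  ring

/-- The coefficients `c_{a,b}` (depending on `j1 ≥ j2 ≥ 0`):
`c_{a,b} = (−1)^{(a+b)/2} · (j2!/(a!(j2−a)!)) · ((j1−j2)!/(b!(j1−j2−b)!)) ·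
((j1−(a+b)/2)!/(j1+1)!) · ((a+b)!/((a+b)/2)!)` when `0 ≤ a ≤ j2`,
`0 ≤ b ≤ j1−j2` and `a+b` is even, and `c_{a,b} = 0` otherwise. -/
def cab (j1 j2 a b : ℤ) : ℚ :=
  if 0 ≤ a ∧ a ≤ j2 ∧ 0 ≤ b ∧ b ≤ j1 - j2 ∧ 2 ∣ (a + b) then
    (-1 : ℚ) ^ ((a + b) / 2) * (zfact j2 / (zfact a * zfact (j2 - a))) *
      (zfact (j1 - j2) / (zfact b * zfact (j1 - j2 - b))) *
      (zfact (j1 - (a + b) / 2) / zfact (j1 + 1)) *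
      (zfact (a + b) / zfact ((a + b) / 2))
  else 0

lemma cab_eval (j1 j2 a b m : ℤ) (ha0 : 0 ≤ a) (ha : a ≤ j2)
    (hb0 : 0 ≤ b) (hb : b ≤ j1 - j2) (hm : a + b = 2 * m) :
    cab j1 j2 a b =
      ((-1 : ℚ) ^ m * (zfact j2 * zfact (j1 - j2) * zfact (j1 - m) * zfact (2*m))) /
        (zfact a * zfact (j2 - a) * zfact b * zfact (j1 - j2 - b) * zfact (j1 + 1) * zfact m) := by
  rw [cab, if_pos (show _ ∧ _ from ⟨ha0, ha, hb0, hb, ⟨m, by omega⟩⟩),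
    show (a + b) / 2 = m by omega, hm]
  ring
lemma L1 (j1 j2 a b m : ℤ) (h2 : 0 ≤ j2) (h12 : j2 ≤ j1)
    (ha0 : 0 ≤ a) (ha : a ≤ j2) (hb0 : 0 ≤ b) (hb : b ≤ j1 - j2)
    (hm : a + b = 2 * m) (hm1 : 1 ≤ m) :
    ((2*m-1 : ℤ) : ℚ) * (4 * (((j2-a+2)*(j2-a+1) : ℤ) : ℚ) * cab j1 j2 (a-2) b) =
      -2 * (a : ℚ) * ((a : ℚ) - 1) * ((j1 : ℚ) - m + 1) * cab j1 j2 a b := by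
  rcases lt_or_ge a 2 with h | h
  · have hz : cab j1 j2 (a-2) b = 0 := by
      rw [cab, if_neg]; omega
    rw [hz]
    have hA : (a:ℚ) * ((a:ℚ)-1) = 0 := by
      rcases (show a = 0 ∨ a = 1 by omega) with rfl | rfl <;> norm_num
    linear_combination (2*((j1:ℚ)-(m:ℚ)+1) * cab j1 j2 a b) * hA
  · have hjm : 2 * m ≤ j1 := by omega
    rw [cab_eval j1 j2 (a-2) b (m-1) (by omega) (by omega) hb0 hb (by omega),
        cab_eval j1 j2 a b m ha0 ha hb0 hb hm,
        ← mul_div_assoc, ← mul_div_assoc, ← mul_div_assoc,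
        div_eq_div_iff (by apply_rules [mul_ne_zero, zfact_ne_zero])
          (by apply_rules [mul_ne_zero, zfact_ne_zero])]
    rw [show j1 - (m-1) = (j1 - m) + 1 by ring, zfact_succ (j1 - m) (by omega),
        show 2*(m-1) = 2*m - 2 by ring,
        zfact_eq (2*m) (by omega), zfact_eq (2*m-1) (by omega), show 2*m-1-1 = 2*m-2 by ring,
        zfact_eq a (by omega), zfact_eq (a-1) (by omega), show a-1-1 = a-2 by ring,
        show j2 - (a-2) = (j2 - a + 1) + 1 by ring, zfact_succ (j2-a+1) (by omega),
        zfact_eq (j2-a+1) (by omega), show j2-a+1-1 = j2-a by ring,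
        zfact_eq m (by omega), neg_one_zpow_pred m]
    push_cast
    ring

lemma L2 (j1 j2 a b m : ℤ) (h2 : 0 ≤ j2) (h12 : j2 ≤ j1)
    (ha0 : 0 ≤ a) (ha : a ≤ j2) (hb0 : 0 ≤ b) (hb : b ≤ j1 - j2)
    (hm : a + b = 2 * m) (hm1 : 1 ≤ m) :
    ((2*m-1 : ℤ) : ℚ) * (8 * (((j2-a+1)*(j1-j2-b+1) : ℤ) : ℚ) * cab j1 j2 (a-1) (b-1)) =
      -4 * (a : ℚ) * (b : ℚ) * ((j1 : ℚ) - m + 1) * cab j1 j2 a b := by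
  rcases lt_or_ge a 1 with h | h
  · have hz : cab j1 j2 (a-1) (b-1) = 0 := by
      rw [cab, if_neg]; omega
    rw [hz]
    have hA : (a : ℚ) = 0 := by
      obtain rfl : a = 0 := by omega
      norm_num
    linear_combination (4 * (b:ℚ) * ((j1:ℚ)-(m:ℚ)+1) * cab j1 j2 a b) * hA
  rcases lt_or_ge b 1 with h' | h'
  · have hz : cab j1 j2 (a-1) (b-1) = 0 := by
      rw [cab, if_neg]; omega
    rw [hz]
    have hA : (b : ℚ) = 0 := by
      obtain rfl : b = 0 := by omega
      norm_num
    linear_combination (4 * (a:ℚ) * ((j1:ℚ)-(m:ℚ)+1) * cab j1 j2 a b) * hA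
  · have hjm : 2 * m ≤ j1 := by omega
    rw [cab_eval j1 j2 (a-1) (b-1) (m-1) (by omega) (by omega) (by omega) (by omega) (by omega),
        cab_eval j1 j2 a b m ha0 ha hb0 hb hm,
        ← mul_div_assoc, ← mul_div_assoc, ← mul_div_assoc,
        div_eq_div_iff (by apply_rules [mul_ne_zero, zfact_ne_zero])
          (by apply_rules [mul_ne_zero, zfact_ne_zero])]
    rw [show j1 - (m-1) = (j1 - m) + 1 by ring, zfact_succ (j1 - m) (by omega),
        show 2*(m-1) = 2*m - 2 by ring,
        zfact_eq (2*m) (by omega), zfact_eq (2*m-1) (by omega), show 2*m-1-1 = 2*m-2 by ring,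
        zfact_eq a (by omega),
        show j2 - (a-1) = (j2 - a) + 1 by ring, zfact_succ (j2-a) (by omega),
        zfact_eq b (by omega),
        show j1 - j2 - (b-1) = (j1 - j2 - b) + 1 by ring, zfact_succ (j1-j2-b) (by omega),
        zfact_eq m (by omega), neg_one_zpow_pred m]
    push_cast
    ring

lemma L3 (j1 j2 a b m : ℤ) (h2 : 0 ≤ j2) (h12 : j2 ≤ j1)
    (ha0 : 0 ≤ a) (ha : a ≤ j2) (hb0 : 0 ≤ b) (hb : b ≤ j1 - j2)
    (hm : a + b = 2 * m) (hm1 : 1 ≤ m) :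
    ((2*m-1 : ℤ) : ℚ) * (4 * (((j1-j2-b+2)*(j1-j2-b+1) : ℤ) : ℚ) * cab j1 j2 a (b-2)) =
      -2 * (b : ℚ) * ((b : ℚ) - 1) * ((j1 : ℚ) - m + 1) * cab j1 j2 a b := by
  rcases lt_or_ge b 2 with h | h
  · have hz : cab j1 j2 a (b-2) = 0 := by
      rw [cab, if_neg]; omega
    rw [hz]
    have hA : (b:ℚ) * ((b:ℚ)-1) = 0 := by
      rcases (show b = 0 ∨ b = 1 by omega) with rfl | rfl <;> norm_num
    linear_combination (2*((j1:ℚ)-(m:ℚ)+1) * cab j1 j2 a b) * hA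
  · have hjm : 2 * m ≤ j1 := by omega
    rw [cab_eval j1 j2 a (b-2) (m-1) ha0 ha (by omega) (by omega) (by omega),
        cab_eval j1 j2 a b m ha0 ha hb0 hb hm,
        ← mul_div_assoc, ← mul_div_assoc, ← mul_div_assoc,
        div_eq_div_iff (by apply_rules [mul_ne_zero, zfact_ne_zero])
          (by apply_rules [mul_ne_zero, zfact_ne_zero])]
    rw [show j1 - (m-1) = (j1 - m) + 1 by ring, zfact_succ (j1 - m) (by omega),
        show 2*(m-1) = 2*m - 2 by ring,
        zfact_eq (2*m) (by omega), zfact_eq (2*m-1) (by omega), show 2*m-1-1 = 2*m-2 by ring,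
        zfact_eq b (by omega), zfact_eq (b-1) (by omega), show b-1-1 = b-2 by ring,
        show j1 - j2 - (b-2) = (j1 - j2 - b + 1) + 1 by ring, zfact_succ (j1-j2-b+1) (by omega),
        zfact_eq (j1-j2-b+1) (by omega), show j1-j2-b+1-1 = j1-j2-b by ring,
        zfact_eq m (by omega), neg_one_zpow_pred m]
    push_cast
    ring

/-- For integers `j1 ≥ j2 ≥ 0` and all `0 ≤ a ≤ j2`,
`0 ≤ b ≤ j1−j2`, the coefficients `c_{a,b}` satisfy the recursion
`(a+b)(2j1−a−b+2)c_{a,b} + 4(j2−a+2)(j2−a+1)c_{a−2,b}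
 + 8(j2−a+1)(j1−j2−b+1)c_{a−1,b−1} + 4(j1−j2−b+2)(j1−j2−b+1)c_{a,b−2}` = 0`. -/
theorem cab_recursion (j1 j2 a b : ℤ) (h2 : 0 ≤ j2) (h12 : j2 ≤ j1)
    (ha0 : 0 ≤ a) (ha : a ≤ j2) (hb0 : 0 ≤ b) (hb : b ≤ j1 - j2) :
    (((a + b) * (2 * j1 - a - b + 2) : ℤ) : ℚ) * cab j1 j2 a b +
      4 * (((j2 - a + 2) * (j2 - a + 1) : ℤ) : ℚ) * cab j1 j2 (a - 2) b +
      8 * (((j2 - a + 1) * (j1 - j2 - b + 1) : ℤ) : ℚ) * cab j1 j2 (a - 1) (b - 1) +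
      4 * (((j1 - j2 - b + 2) * (j1 - j2 - b + 1) : ℤ) : ℚ) * cab j1 j2 a (b - 2) = 0 := by
  by_cases hpar : 2 ∣ (a + b)
  · obtain ⟨m, hm⟩ := hpar
    rcases le_or_gt m 0 with hm0 | hm1
    · obtain rfl : a = 0 := by omega
      obtain rfl : b = 0 := by omega
      have z1 : cab j1 j2 (0-2) 0 = 0 := by rw [cab, if_neg]; omega
      have z2 : cab j1 j2 (0-1) (0-1) = 0 := by rw [cab, if_neg]; omega
      have z3 : cab j1 j2 0 (0-2) = 0 := by rw [cab, if_neg]; omega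
      rw [z1, z2, z3]
      push_cast
      ring
    · obtain rfl : b = 2 * m - a := by omega
      have h1 := L1 j1 j2 a (2*m-a) m h2 h12 ha0 ha hb0 hb (by ring) hm1
      have h2' := L2 j1 j2 a (2*m-a) m h2 h12 ha0 ha hb0 hb (by ring) hm1
      have h3 := L3 j1 j2 a (2*m-a) m h2 h12 ha0 ha hb0 hb (by ring) hm1
      have hq : ((2*m-1 : ℤ) : ℚ) ≠ 0 := Int.cast_ne_zero.mpr (by omega)
      apply mul_left_cancel₀ hq
      push_cast at h1 h2' h3 ⊢
      linear_combination h1 + h2' + h3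
  · have z0 : cab j1 j2 a b = 0 := by rw [cab, if_neg]; omega
    have z1 : cab j1 j2 (a-2) b = 0 := by rw [cab, if_neg]; omega
    have z2 : cab j1 j2 (a-1) (b-1) = 0 := by rw [cab, if_neg]; omega
    have z3 : cab j1 j2 a (b-2) = 0 := by rw [cab, if_neg]; omega
    rw [z0, z1, z2, z3]
    ring
end

section
/- Let j1 ≥ j2 ≥ 0 be integers. Then Σ_{a=0}^{j2} Σ_{b=0}^{j1−j2} c_{a,b}·2^{j1−a−b} = 1. -/
/-- Auxiliary: the coefficient of the binomial product once `a,b` are merged into `k = a+b`. -/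
noncomputable def Hfun (n k : ℕ) : ℚ :=
  if 2 ∣ k then (-1:ℚ)^(k/2) * ((n - k/2).factorial : ℚ) * (k.factorial : ℚ) /
      (((n+1).factorial : ℚ) * ((k/2).factorial : ℚ)) * (2:ℚ)^((n:ℤ) - k)
  else 0

theorem my_cheb (n : ℕ) : (∑ s ∈ Finset.range (n+1),
    (-1:ℚ)^s * ((n-s).choose s : ℚ) * (2:ℚ)^((n:ℤ) - 2*s)) = n+1 := by
  induction n using Nat.strong_induction_on with
  | _ n ih =>
    match n with
    | 0 => norm_num
    | 1 =>
      rw [Finset.sum_range_succ, Finset.sum_range_succ, Finset.sum_range_zero]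
      norm_num
    | (k+2) =>
      have h0 := ih k (by omega)
      have h1 := ih (k+1) (by omega)
      set c : ℕ → ℚ := fun s => (-1:ℚ)^s * ((k-s).choose s : ℚ) * (2:ℚ)^((k:ℤ) - 2*s) with hc
      set d : ℕ → ℚ := fun s => (-1:ℚ)^s * ((k-s).choose (s+1) : ℚ) * (2:ℚ)^((k:ℤ) - 2*s) with hd
      have e1 : (∑ s ∈ Finset.range (k+2),
          (-1:ℚ)^s * ((k+1-s).choose s : ℚ) * (2:ℚ)^(((k+1:ℕ):ℤ) - 2*s))
          = (∑ s ∈ Finset.range (k+1), (-(1/2)) * d s) + 2^((k:ℤ)+1) := by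
        rw [Finset.sum_range_succ']
        congr 1
        · apply Finset.sum_congr rfl
          intro s hs
          simp only [Finset.mem_range] at hs
          have h1 : k + 1 - (s+1) = k - s := by omega
          rw [h1, hd]
          have h2 : ((k:ℤ)) + 1 - 2*((s:ℤ)+1) = ((k:ℤ) - 2*s) + (-1) := by ring
          push_cast
          rw [h2, zpow_add₀ (by norm_num : (2:ℚ) ≠ 0), pow_succ]
          norm_num
          ring
        · push_cast; norm_num
      have e2 : (∑ s ∈ Finset.range (k+3),
          (-1:ℚ)^s * ((k+2-s).choose s : ℚ) * (2:ℚ)^(((k+2:ℕ):ℤ) - 2*s))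
          = (∑ s ∈ Finset.range (k+1), (-(c s) - d s)) + 0 + 2^((k:ℤ)+2) := by
        rw [Finset.sum_range_succ']
        congr 1
        · rw [Finset.sum_range_succ]
          congr 1
          · apply Finset.sum_congr rfl
            intro s hs
            simp only [Finset.mem_range] at hs
            have h1 : k + 1 - s = (k - s) + 1 := by omega
            have h2 : ((k:ℤ)) + 2 - 2*((s:ℤ)+1) = (k:ℤ) - 2*s := by ring
            push_cast
            rw [h2, h1, Nat.choose_succ_succ, hc, hd]
            push_cast
            ring
          · have h1 : k + 2 - (k+1+1) = 0 := by omega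
            rw [h1, Nat.choose_eq_zero_of_lt (by omega)]
            push_cast
            ring
        · push_cast; norm_num
      have e3 : ∑ s ∈ Finset.range (k+1), (-(c s) - d s)
          = -(∑ s ∈ Finset.range (k+1), c s) - ∑ s ∈ Finset.range (k+1), d s := by
        rw [Finset.sum_sub_distrib, Finset.sum_neg_distrib]
      have e4 : ∑ s ∈ Finset.range (k+1), (-(1/2):ℚ) * d s
          = (-(1/2):ℚ) * ∑ s ∈ Finset.range (k+1), d s := by
        rw [Finset.mul_sum]
      rw [e4] at e1
      have hT0 : ∑ s ∈ Finset.range (k+1), c s = k+1 := by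
        have := h0; rw [hc]; push_cast at this ⊢; convert this using 1
      rw [h1] at e1
      have key : ∑ s ∈ Finset.range (k+1), d s = 2*2^((k:ℤ)+1) - 2 * ((k:ℚ)+2) := by
        push_cast at e1; linarith
      rw [e2, e3, hT0, key]
      have h5 : (2:ℚ)^((k:ℤ)+2) = 2 * 2^((k:ℤ)+1) := by
        have h6 : (k:ℤ)+2 = ((k:ℤ)+1)+1 := by ring
        rw [h6, zpow_add_one₀ (by norm_num : (2:ℚ) ≠ 0)]; ring
      rw [h5]
      push_cast
      ring

theorem my_vdm (m n : ℕ) (hmn : m ≤ n) (H : ℕ → ℚ) :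
    ∑ a ∈ Finset.range (m+1), ∑ b ∈ Finset.range (n-m+1),
      (m.choose a : ℚ) * ((n-m).choose b : ℚ) * H (a+b)
    = ∑ k ∈ Finset.range (n+1), (n.choose k : ℚ) * H k := by
  classical
  set F : ℕ × ℕ → ℚ := fun p => (m.choose p.1 : ℚ) * ((n-m).choose p.2 : ℚ) * H (p.1+p.2) with hF
  have hdisj : (↑(Finset.range (n+1)) : Set ℕ).PairwiseDisjoint Finset.HasAntidiagonal.antidiagonal := by
    intro x _ y _ hxy
    simp only [Finset.disjoint_left]
    intro p hp hq
    rw [Finset.HasAntidiagonal.mem_antidiagonal] at hp hq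
    omega
  have hRHS : ∑ k ∈ Finset.range (n+1), (n.choose k : ℚ) * H k
      = ∑ p ∈ (Finset.range (n+1)).biUnion Finset.HasAntidiagonal.antidiagonal, F p := by
    rw [Finset.sum_biUnion hdisj]
    apply Finset.sum_congr rfl
    intro k _
    have : (n.choose k : ℚ) = ∑ p ∈ Finset.HasAntidiagonal.antidiagonal k, (m.choose p.1 : ℚ) * ((n-m).choose p.2 : ℚ) := by
      have h := Nat.add_choose_eq m (n-m) k
      rw [Nat.add_sub_cancel' hmn] at h
      rw [h]
      push_cast
      rfl
    rw [this, Finset.sum_mul]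
    apply Finset.sum_congr rfl
    intro p hp
    rw [Finset.HasAntidiagonal.mem_antidiagonal] at hp
    rw [hF]
    simp [hp]
  have hLHS : ∑ a ∈ Finset.range (m+1), ∑ b ∈ Finset.range (n-m+1),
      (m.choose a : ℚ) * ((n-m).choose b : ℚ) * H (a+b)
      = ∑ p ∈ Finset.range (m+1) ×ˢ Finset.range (n-m+1), F p := by
    rw [Finset.sum_product]
  rw [hLHS, hRHS]
  apply Finset.sum_subset
  · intro p hp
    rw [Finset.mem_product, Finset.mem_range, Finset.mem_range] at hp
    rw [Finset.mem_biUnion]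
    exact ⟨p.1 + p.2, Finset.mem_range.mpr (by omega), Finset.HasAntidiagonal.mem_antidiagonal.mpr rfl⟩
  · intro p hp hnp
    rw [Finset.mem_biUnion] at hp
    obtain ⟨k, hk, hpk⟩ := hp
    rw [Finset.mem_product, Finset.mem_range, Finset.mem_range] at hnp
    push_neg at hnp
    rw [hF]
    by_cases h1 : p.1 ≤ m
    · have h2 : n - m < p.2 := by
        rcases Nat.lt_or_ge p.1 (m+1) with h | h
        · exact hnp h
        · omega
      simp [Nat.choose_eq_zero_of_lt h2]
    · push_neg at h1
      simp [Nat.choose_eq_zero_of_lt h1]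

theorem my_sum_even (N : ℕ) (G : ℕ → ℚ) :
    ∑ k ∈ Finset.range (N+1), (if 2 ∣ k then G (k/2) else 0)
      = ∑ s ∈ Finset.range (N/2+1), G s := by
  classical
  rw [← Finset.sum_filter]
  refine Finset.sum_nbij' (fun k => k/2) (fun s => 2*s) ?_ ?_ ?_ ?_ ?_
  · intro a ha
    simp only [Finset.mem_filter, Finset.mem_range] at ha ⊢
    omega
  · intro a ha
    simp only [Finset.mem_filter, Finset.mem_range] at ha ⊢
    omega
  · intro a ha
    simp only [Finset.mem_filter, Finset.mem_range] at ha
    omega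
  · intro a ha
    simp only [Finset.mem_range] at ha
    omega
  · intro a ha
    rfl

theorem my_term_eq (n s : ℕ) (h : 2*s ≤ n) :
    (n.choose (2*s) : ℚ) * ((-1:ℚ)^s * ((n - s).factorial : ℚ) * ((2*s).factorial : ℚ) /
      (((n+1).factorial : ℚ) * (s.factorial : ℚ)) * (2:ℚ)^((n:ℤ)-2*s))
    = ((-1:ℚ)^s * ((n-s).choose s : ℚ) * (2:ℚ)^((n:ℤ)-2*s)) / (n+1) := by
  rw [Nat.cast_choose ℚ h, Nat.cast_choose ℚ (show s ≤ n-s by omega)]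
  have hss : n - s - s = n - 2*s := by omega
  rw [hss]
  have h1 : ((n+1).factorial : ℚ) = ((n:ℚ)+1) * (n.factorial : ℚ) := by
    rw [Nat.factorial_succ]; push_cast; ring
  rw [h1]
  have f1 : ((2*s).factorial : ℚ) ≠ 0 := by positivity
  have f2 : ((n-2*s).factorial : ℚ) ≠ 0 := by positivity
  have f3 : (s.factorial : ℚ) ≠ 0 := by positivity
  have f4 : (n.factorial : ℚ) ≠ 0 := by positivity
  have f5 : ((n:ℚ)+1) ≠ 0 := by positivity
  field_simp

theorem my_sum_Icc_cast (N : ℕ) (f : ℤ → ℚ) :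
    ∑ a ∈ Finset.Icc (0:ℤ) (N:ℤ), f a = ∑ a ∈ Finset.range (N+1), f (a:ℤ) := by
  refine Finset.sum_nbij' (fun a => a.toNat) (fun a => (a:ℤ)) ?_ ?_ ?_ ?_ ?_
  · intro a ha
    simp only [Finset.mem_Icc] at ha
    simp only [Finset.mem_range]
    omega
  · intro a ha
    simp only [Finset.mem_range] at ha
    simp only [Finset.mem_Icc]
    omega
  · intro a ha
    simp only [Finset.mem_Icc] at ha
    omega
  · intro a _
    omega
  · intro a ha
    simp only [Finset.mem_Icc] at ha
    rw [Int.toNat_of_nonneg ha.1]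

theorem my_cab_eval (n m a b : ℕ) (hmn : m ≤ n) (ha : a ≤ m) (hb : b ≤ n - m) :
    cab (n:ℤ) (m:ℤ) (a:ℤ) (b:ℤ) * (2:ℚ)^((n:ℤ) - a - b)
    = (m.choose a : ℚ) * ((n-m).choose b : ℚ) * Hfun n (a+b) := by
  unfold cab Hfun
  by_cases hdvd : 2 ∣ (a+b)
  · have hab : a + b ≤ n := by omega
    have hcond : 0 ≤ (a:ℤ) ∧ (a:ℤ) ≤ (m:ℤ) ∧ 0 ≤ (b:ℤ) ∧ (b:ℤ) ≤ (n:ℤ) - (m:ℤ) ∧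
        (2:ℤ) ∣ ((a:ℤ)+(b:ℤ)) := by
      refine ⟨by positivity, by exact_mod_cast ha, by positivity, by omega, by omega⟩
    rw [if_pos hcond, if_pos hdvd]
    have hdiv : ((a:ℤ)+(b:ℤ))/2 = (((a+b)/2 : ℕ) : ℤ) := by omega
    rw [hdiv, zpow_natCast]
    simp only [zfact]
    rw [show ((m:ℤ)).toNat = m from by omega,
        show ((a:ℤ)).toNat = a from by omega,
        show ((m:ℤ) - (a:ℤ)).toNat = m - a from by omega,
        show ((n:ℤ) - (m:ℤ)).toNat = n - m from by omega,
        show ((b:ℤ)).toNat = b from by omega,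
        show ((n:ℤ) - (m:ℤ) - (b:ℤ)).toNat = n - m - b from by omega,
        show ((n:ℤ) - (((a+b)/2 : ℕ) : ℤ)).toNat = n - (a+b)/2 from by omega,
        show ((n:ℤ) + 1).toNat = n + 1 from by omega,
        show ((a:ℤ) + (b:ℤ)).toNat = a + b from by omega,
        show ((((a+b)/2 : ℕ) : ℤ)).toNat = (a+b)/2 from by omega]
    rw [Nat.cast_choose ℚ ha, Nat.cast_choose ℚ hb]
    have hexp : (n:ℤ) - (a:ℤ) - (b:ℤ) = (n:ℤ) - ((a+b : ℕ) : ℤ) := by push_cast; ring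
    rw [hexp]
    have f1 : ((a.factorial : ℚ)) ≠ 0 := by positivity
    have f2 : (((m-a).factorial : ℚ)) ≠ 0 := by positivity
    have f3 : ((b.factorial : ℚ)) ≠ 0 := by positivity
    have f4 : (((n-m-b).factorial : ℚ)) ≠ 0 := by positivity
    have f5 : (((n+1).factorial : ℚ)) ≠ 0 := by positivity
    have f6 : ((((a+b)/2).factorial : ℚ)) ≠ 0 := by positivity
    field_simp
  · have hncond : ¬ (0 ≤ (a:ℤ) ∧ (a:ℤ) ≤ (m:ℤ) ∧ 0 ≤ (b:ℤ) ∧ (b:ℤ) ≤ (n:ℤ) - (m:ℤ) ∧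
        (2:ℤ) ∣ ((a:ℤ)+(b:ℤ))) := by
      intro h
      exact hdvd (by exact_mod_cast h.2.2.2.2)
    rw [if_neg hncond, if_neg hdvd]
    ring


/-- For integers `j1 ≥ j2 ≥ 0`:
`Σ_{a=0}^{j2} Σ_{b=0}^{j1−j2} c_{a,b}·2^{j1−a−b} = 1`. -/
theorem cab_normalization (j1 j2 : ℤ) (h2 : 0 ≤ j2) (h12 : j2 ≤ j1) :
    ∑ a ∈ Finset.Icc (0 : ℤ) j2, ∑ b ∈ Finset.Icc (0 : ℤ) (j1 - j2),
      cab j1 j2 a b * (2 : ℚ) ^ (j1 - a - b) = 1 := by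
  obtain ⟨m, rfl⟩ := Int.eq_ofNat_of_zero_le h2
  obtain ⟨n, rfl⟩ := Int.eq_ofNat_of_zero_le (le_trans h2 h12)
  have hmn : m ≤ n := by exact_mod_cast h12
  have hsub : (n:ℤ) - (m:ℤ) = ((n - m : ℕ) : ℤ) := by omega
  rw [my_sum_Icc_cast m]
  have step1 : ∀ a ∈ Finset.range (m+1),
      (∑ b ∈ Finset.Icc (0:ℤ) ((n:ℤ) - (m:ℤ)), cab (n:ℤ) (m:ℤ) (a:ℤ) b * (2:ℚ)^((n:ℤ) - a - b))
      = ∑ b ∈ Finset.range (n-m+1), (m.choose a : ℚ) * ((n-m).choose b : ℚ) * Hfun n (a+b) := by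
    intro a ha
    simp only [Finset.mem_range] at ha
    rw [hsub, my_sum_Icc_cast (n-m)]
    apply Finset.sum_congr rfl
    intro b hb
    simp only [Finset.mem_range] at hb
    exact my_cab_eval n m a b hmn (by omega) (by omega)
  rw [Finset.sum_congr rfl step1, my_vdm m n hmn (Hfun n)]
  have step2 : ∀ k ∈ Finset.range (n+1), (n.choose k : ℚ) * Hfun n k
      = if 2 ∣ k then ((n.choose (2*(k/2)) : ℚ) *
          ((-1:ℚ)^(k/2) * ((n - k/2).factorial : ℚ) * ((2*(k/2)).factorial : ℚ) /
          (((n+1).factorial : ℚ) * ((k/2).factorial : ℚ)) * (2:ℚ)^((n:ℤ)-2*((k/2 : ℕ) : ℤ)))) else 0 := by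
    intro k _
    unfold Hfun
    by_cases hdvd : 2 ∣ k
    · rw [if_pos hdvd, if_pos hdvd]
      have h1 : 2 * (k/2) = k := by omega
      have h2 : (n:ℤ) - 2*((k/2 : ℕ) : ℤ) = (n:ℤ) - ((k:ℕ) : ℤ) := by omega
      rw [h1, h2]
    · rw [if_neg hdvd, if_neg hdvd, mul_zero]
  rw [Finset.sum_congr rfl step2]
  have step3 : ∑ k ∈ Finset.range (n+1), (if 2 ∣ k then ((n.choose (2*(k/2)) : ℚ) *
          ((-1:ℚ)^(k/2) * ((n - k/2).factorial : ℚ) * ((2*(k/2)).factorial : ℚ) /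
          (((n+1).factorial : ℚ) * ((k/2).factorial : ℚ)) * (2:ℚ)^((n:ℤ)-2*((k/2 : ℕ) : ℤ)))) else 0)
      = ∑ s ∈ Finset.range (n/2+1), ((n.choose (2*s) : ℚ) *
          ((-1:ℚ)^s * ((n - s).factorial : ℚ) * ((2*s).factorial : ℚ) /
          (((n+1).factorial : ℚ) * (s.factorial : ℚ)) * (2:ℚ)^((n:ℤ)-2*((s:ℕ):ℤ)))) :=
    my_sum_even n (fun s => (n.choose (2*s) : ℚ) *
          ((-1:ℚ)^s * ((n - s).factorial : ℚ) * ((2*s).factorial : ℚ) /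
          (((n+1).factorial : ℚ) * (s.factorial : ℚ)) * (2:ℚ)^((n:ℤ)-2*((s:ℕ):ℤ))))
  rw [step3]
  have step4 : ∀ s ∈ Finset.range (n/2+1), ((n.choose (2*s) : ℚ) *
          ((-1:ℚ)^s * ((n - s).factorial : ℚ) * ((2*s).factorial : ℚ) /
          (((n+1).factorial : ℚ) * (s.factorial : ℚ)) * (2:ℚ)^((n:ℤ)-2*((s:ℕ):ℤ))))
      = ((-1:ℚ)^s * ((n-s).choose s : ℚ) * (2:ℚ)^((n:ℤ) - 2*s)) / (n+1) := by
    intro s hs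
    simp only [Finset.mem_range] at hs
    exact my_term_eq n s (by omega)
  rw [Finset.sum_congr rfl step4, ← Finset.sum_div]
  have step5 : ∑ s ∈ Finset.range (n/2+1), (-1:ℚ)^s * ((n-s).choose s : ℚ) * (2:ℚ)^((n:ℤ) - 2*s)
      = ∑ s ∈ Finset.range (n+1), (-1:ℚ)^s * ((n-s).choose s : ℚ) * (2:ℚ)^((n:ℤ) - 2*s) := by
    apply Finset.sum_subset
    · apply Finset.range_subset_range.mpr; omega
    · intro s hs hns
      simp only [Finset.mem_range] at hs hns
      rw [Nat.choose_eq_zero_of_lt (by omega : n - s < s)]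
      ring
  rw [step5, my_cheb n]
  have : ((n:ℚ)+1) ≠ 0 := by positivity
  field_simp
end

section
/- Fix a nonnegative integer n and let g(x,y) = (1 − (y/x)^{n+1})·(1 − (xy)^{n+1}) / ((n+1)·y^{n}·(1 − y/x)·(1 − xy)). Then for all x, y ∈ ℂ∖{0, 1, −1} with y ≠ x and x·y ≠ 1, the identity D g = (n+1)²·g holds at (x,y). -/
/-- Partial derivative in the first variable of a (curried) function of two
complex variables. -/
noncomputable def p1 (f : ℂ → ℂ → ℂ) (x y : ℂ) : ℂ := deriv (fun t => f t y) x

/-- Partial derivative in the second variable. -/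
noncomputable def p2 (f : ℂ → ℂ → ℂ) (x y : ℂ) : ℂ := deriv (fun t => f x t) y

/-- The genus-two operator `Ĥ1` specialized at `x23 = 1` (variables `x = x12`,
`y = x13`):
`D f = x²f_xx + y²f_yy + ((2(x²+1)(y²+1) − 8xy)/((x−x⁻¹)(y−y⁻¹)))f_xy
 + ((3x²+1)/(x−x⁻¹))f_x + ((3y²+1)/(y−y⁻¹))f_y + f`. -/
noncomputable def Dop (f : ℂ → ℂ → ℂ) (x y : ℂ) : ℂ :=
  x ^ 2 * p1 (p1 f) x y + y ^ 2 * p2 (p2 f) x y +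
    ((2 * (x ^ 2 + 1) * (y ^ 2 + 1) - 8 * x * y) / ((x - x⁻¹) * (y - y⁻¹))) * p1 (p2 f) x y +
    ((3 * x ^ 2 + 1) / (x - x⁻¹)) * p1 f x y +
    ((3 * y ^ 2 + 1) / (y - y⁻¹)) * p2 f x y + f x y

open Filter Topology

theorem HasDerivAt.congr_d {f : ℂ → ℂ} {a b x : ℂ} (h : HasDerivAt f a x) (e : a = b) :
    HasDerivAt f b x := e ▸ h

noncomputable def ph (n : ℕ) (s : ℂ) : ℂ := (1 - s ^ (n + 1)) / (1 - s)

noncomputable def ph1 (n : ℕ) (s : ℂ) : ℂ :=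
  ((1 - s ^ (n + 1)) - ((n : ℂ) + 1) * s ^ n * (1 - s)) / (1 - s) ^ 2

noncomputable def ph2 (n : ℕ) (s : ℂ) : ℂ :=
  ((n : ℂ) * ph n s - (2 * s - (n : ℂ) * (s - 1)) * ph1 n s) / (s * (s - 1))

theorem hasDerivAt_pow_n (n : ℕ) {s : ℂ} (hs : s ≠ 0) :
    HasDerivAt (fun z : ℂ => z ^ n) ((n : ℂ) * s ^ n / s) s := by
  have h := hasDerivAt_pow n s
  refine h.congr_d ?_
  cases n with
  | zero => simp
  | succ m =>
    simp only [Nat.add_sub_cancel, pow_succ]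
    field_simp

theorem hasDerivAt_ph (n : ℕ) {s : ℂ} (hs1 : s ≠ 1) :
    HasDerivAt (ph n) (ph1 n s) s := by
  have h1 : HasDerivAt (fun z : ℂ => 1 - z ^ (n + 1)) (-(((n : ℂ) + 1) * s ^ n)) s := by
    have := ((hasDerivAt_pow (n + 1) s).const_sub 1)
    refine this.congr_d ?_
    simp [Nat.add_sub_cancel]
  have h2 : HasDerivAt (fun z : ℂ => 1 - z) (-1 : ℂ) s := by
    simpa using (hasDerivAt_id s).const_sub 1
  have hden : (1 : ℂ) - s ≠ 0 := sub_ne_zero.mpr (Ne.symm hs1)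
  unfold ph
  exact (h1.div h2 hden).congr_d (by simp only [ph1]; ring)

theorem hasDerivAt_ph1 (n : ℕ) {s : ℂ} (hs0 : s ≠ 0) (hs1 : s ≠ 1) :
    HasDerivAt (ph1 n) (ph2 n s) s := by
  have h1 : HasDerivAt (fun z : ℂ => 1 - z ^ (n + 1)) (-(((n : ℂ) + 1) * s ^ n)) s := by
    have := ((hasDerivAt_pow (n + 1) s).const_sub 1)
    refine this.congr_d ?_
    simp [Nat.add_sub_cancel]
  have h2 : HasDerivAt (fun z : ℂ => ((n : ℂ) + 1) * z ^ n * (1 - z))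
      ((((n : ℂ) + 1) * ((n : ℂ) * s ^ n / s)) * (1 - s) + (((n : ℂ) + 1) * s ^ n) * (-1)) s := by
    have ha := (hasDerivAt_pow_n n hs0).const_mul ((n : ℂ) + 1)
    have hb : HasDerivAt (fun z : ℂ => 1 - z) (-1 : ℂ) s := by
      simpa using (hasDerivAt_id s).const_sub 1
    exact ha.mul hb
  have hden : HasDerivAt (fun z : ℂ => (1 - z) ^ 2) ((2 : ℕ) * (1 - s) ^ 1 * (-1)) s := by
    have hb : HasDerivAt (fun z : ℂ => 1 - z) (-1 : ℂ) s := by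
      simpa using (hasDerivAt_id s).const_sub 1
    exact hb.pow 2
  have hden_ne : ((1 : ℂ) - s) ^ 2 ≠ 0 := pow_ne_zero 2 (sub_ne_zero.mpr (Ne.symm hs1))
  have hnum := h1.sub h2
  unfold ph1
  refine ((hnum.div hden hden_ne).congr_d ?_)
  simp only [ph2, ph1, ph, Pi.sub_apply]
  have hs1' : (1 : ℂ) - s ≠ 0 := sub_ne_zero.mpr (Ne.symm hs1)
  have hs1'' : s - 1 ≠ 0 := sub_ne_zero.mpr hs1
  field_simp
  ring

noncomputable def P1 (n : ℕ) (x y : ℂ) : ℂ :=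
  (ph n (y / x) * ph1 n (x * y) * x ^ 2 * y - ph n (x * y) * ph1 n (y / x) * y) /
    (((n : ℂ) + 1) * y ^ n * x ^ 2)

noncomputable def P2 (n : ℕ) (x y : ℂ) : ℂ :=
  (ph n (x * y) * ph1 n (y / x) * y + ph n (y / x) * ph1 n (x * y) * x ^ 2 * y -
      (n : ℂ) * ph n (y / x) * ph n (x * y) * x) /
    (((n : ℂ) + 1) * y ^ n * y * x)

noncomputable def Q11 (n : ℕ) (x y : ℂ) : ℂ :=
  (ph2 n (y / x) * y ^ 2 * ph n (x * y) + 2 * ph1 n (y / x) * y * x * ph n (x * y) -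
      2 * y ^ 2 * x ^ 2 * ph1 n (y / x) * ph1 n (x * y) +
      ph n (y / x) * ph2 n (x * y) * x ^ 4 * y ^ 2) /
    (((n : ℂ) + 1) * y ^ n * x ^ 4)

noncomputable def Q22 (n : ℕ) (x y : ℂ) : ℂ :=
  (ph2 n (y / x) * y ^ 2 * ph n (x * y) + ph1 n (y / x) * y * x * ph n (x * y) +
      2 * y ^ 2 * x ^ 2 * ph1 n (y / x) * ph1 n (x * y) +
      ph n (y / x) * ph2 n (x * y) * x ^ 4 * y ^ 2 +
      ph n (y / x) * ph1 n (x * y) * x ^ 3 * y -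
      (n : ℂ) * ph1 n (y / x) * x * y * ph n (x * y) -
      (n : ℂ) * ph n (y / x) * ph1 n (x * y) * x ^ 3 * y -
      ((n : ℂ) + 1) * (ph1 n (y / x) * y * x * ph n (x * y) +
        ph n (y / x) * ph1 n (x * y) * x ^ 3 * y -
        (n : ℂ) * ph n (y / x) * ph n (x * y) * x ^ 2)) /
    (((n : ℂ) + 1) * y ^ n * y ^ 2 * x ^ 2)

noncomputable def Q12 (n : ℕ) (x y : ℂ) : ℂ :=
  (-(ph2 n (y / x) * y ^ 2 * ph n (x * y)) - ph1 n (y / x) * x * y * ph n (x * y) +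
      ph n (y / x) * ph2 n (x * y) * x ^ 4 * y ^ 2 + ph n (y / x) * ph1 n (x * y) * x ^ 3 * y +
      (n : ℂ) * (ph1 n (y / x) * x * y * ph n (x * y) -
        ph n (y / x) * ph1 n (x * y) * x ^ 3 * y)) /
    (((n : ℂ) + 1) * y ^ n * x ^ 3 * y)

section TwoVar

variable (n : ℕ) {x y : ℂ}

theorem nu_ne (n : ℕ) : ((n : ℂ) + 1) ≠ 0 := Nat.cast_add_one_ne_zero n

theorem hasDerivAt_g1 (hx0 : x ≠ 0) (hy0 : y ≠ 0) (hs1 : y / x ≠ 1) (ht1 : x * y ≠ 1) :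
    HasDerivAt (fun t => ph n (y / t) * ph n (t * y) / (((n : ℂ) + 1) * y ^ n))
      (P1 n x y) x := by
  have hinner1 : HasDerivAt (fun t : ℂ => y / t) (-(y / x ^ 2)) x :=
    ((hasDerivAt_const x y).div (hasDerivAt_id x) hx0).congr_d (by simp only [id_eq]; ring)
  have hinner2 : HasDerivAt (fun t : ℂ => t * y) y x := by
    simpa using (hasDerivAt_id x).mul_const y
  have hc1 : HasDerivAt (fun t : ℂ => ph n (y / t)) (ph1 n (y / x) * -(y / x ^ 2)) x :=
    (hasDerivAt_ph n hs1).comp x hinner1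
  have hc2 : HasDerivAt (fun t : ℂ => ph n (t * y)) (ph1 n (x * y) * y) x :=
    by have := (hasDerivAt_ph n ht1).comp x hinner2; exact this
  refine ((hc1.mul hc2).div_const _).congr_d ?_
  simp only [P1, Pi.mul_apply, Pi.sub_apply, Pi.add_apply]
  have hyn : (y : ℂ) ^ n ≠ 0 := pow_ne_zero n hy0
  field_simp
  ring

theorem hasDerivAt_g2 (hx0 : x ≠ 0) (hy0 : y ≠ 0) (hs1 : y / x ≠ 1) (ht1 : x * y ≠ 1) :
    HasDerivAt (fun u => ph n (u / x) * ph n (x * u) / (((n : ℂ) + 1) * u ^ n))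
      (P2 n x y) y := by
  have hc1 : HasDerivAt (fun u : ℂ => ph n (u / x)) (ph1 n (y / x) * (1 / x)) y :=
    by have := (hasDerivAt_ph n hs1).comp y (((hasDerivAt_id y).div_const x).congr_d (b := 1 / x) (by ring)); exact this
  have hc2 : HasDerivAt (fun u : ℂ => ph n (x * u)) (ph1 n (x * y) * x) y :=
    (hasDerivAt_ph n ht1).comp y (((hasDerivAt_id y).const_mul x).congr_d (by ring))
  have hden : HasDerivAt (fun u : ℂ => ((n : ℂ) + 1) * u ^ n)
      (((n : ℂ) + 1) * ((n : ℂ) * y ^ n / y)) y := (hasDerivAt_pow_n n hy0).const_mul _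
  have hden_ne : ((n : ℂ) + 1) * y ^ n ≠ 0 := mul_ne_zero (nu_ne n) (pow_ne_zero n hy0)
  refine ((hc1.mul hc2).div hden hden_ne).congr_d ?_
  simp only [P2, Pi.mul_apply, Pi.sub_apply, Pi.add_apply]
  have hyn : (y : ℂ) ^ n ≠ 0 := pow_ne_zero n hy0
  field_simp

set_option maxHeartbeats 2000000 in
theorem hasDerivAt_P1x (hx0 : x ≠ 0) (hy0 : y ≠ 0) (hs1 : y / x ≠ 1) (ht1 : x * y ≠ 1) :
    HasDerivAt (fun t => P1 n t y) (Q11 n x y) x := by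
  have hs0 : y / x ≠ 0 := div_ne_zero hy0 hx0
  have ht0 : x * y ≠ 0 := mul_ne_zero hx0 hy0
  have hyn : (y : ℂ) ^ n ≠ 0 := pow_ne_zero n hy0
  have hinner1 : HasDerivAt (fun t : ℂ => y / t) (-(y / x ^ 2)) x :=
    ((hasDerivAt_const x y).div (hasDerivAt_id x) hx0).congr_d (by simp only [id_eq]; ring)
  have hinner2 : HasDerivAt (fun t : ℂ => t * y) y x := by
    simpa using (hasDerivAt_id x).mul_const y
  have hc1 : HasDerivAt (fun t : ℂ => ph n (y / t)) (ph1 n (y / x) * -(y / x ^ 2)) x :=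
    (hasDerivAt_ph n hs1).comp x hinner1
  have hc2 : HasDerivAt (fun t : ℂ => ph n (t * y)) (ph1 n (x * y) * y) x :=
    by have := (hasDerivAt_ph n ht1).comp x hinner2; exact this
  have hb1 : HasDerivAt (fun t : ℂ => ph1 n (y / t)) (ph2 n (y / x) * -(y / x ^ 2)) x :=
    (hasDerivAt_ph1 n hs0 hs1).comp x hinner1
  have hb2 : HasDerivAt (fun t : ℂ => ph1 n (t * y)) (ph2 n (x * y) * y) x :=
    by have := (hasDerivAt_ph1 n ht0 ht1).comp x hinner2; exact this
  have hx2 : HasDerivAt (fun t : ℂ => t ^ 2) ((2 : ℕ) * x ^ 1 * 1) x := (hasDerivAt_id x).pow 2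
  have hA := ((hc1.mul hb2).mul hx2).mul_const y
  have hB := ((hc2.mul hb1).mul_const y)
  have hden : HasDerivAt (fun t : ℂ => ((n : ℂ) + 1) * y ^ n * t ^ 2)
      (((n : ℂ) + 1) * y ^ n * ((2 : ℕ) * x ^ 1 * 1)) x := hx2.const_mul _
  have hden_ne : ((n : ℂ) + 1) * y ^ n * x ^ 2 ≠ 0 :=
    mul_ne_zero (mul_ne_zero (nu_ne n) hyn) (pow_ne_zero 2 hx0)
  refine (((hA.sub hB).div hden hden_ne).congr_d ?_)
  simp only [Q11, P1, Pi.mul_apply, Pi.sub_apply, Pi.add_apply]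
  rw [div_eq_div_iff (pow_ne_zero 2 hden_ne)
    (mul_ne_zero (mul_ne_zero (nu_ne n) hyn) (pow_ne_zero 4 hx0))]
  field_simp
  ring

set_option maxHeartbeats 2000000 in
theorem hasDerivAt_P2y (hx0 : x ≠ 0) (hy0 : y ≠ 0) (hs1 : y / x ≠ 1) (ht1 : x * y ≠ 1) :
    HasDerivAt (fun u => P2 n x u) (Q22 n x y) y := by
  have hs0 : y / x ≠ 0 := div_ne_zero hy0 hx0
  have ht0 : x * y ≠ 0 := mul_ne_zero hx0 hy0
  have hyn : (y : ℂ) ^ n ≠ 0 := pow_ne_zero n hy0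
  have hinner1 : HasDerivAt (fun u : ℂ => u / x) (1 / x) y :=
    ((hasDerivAt_id y).div_const x).congr_d (by ring)
  have hinner2 : HasDerivAt (fun u : ℂ => x * u) x y :=
    ((hasDerivAt_id y).const_mul x).congr_d (by ring)
  have hc1 : HasDerivAt (fun u : ℂ => ph n (u / x)) (ph1 n (y / x) * (1 / x)) y :=
    by have := (hasDerivAt_ph n hs1).comp y hinner1; exact this
  have hc2 : HasDerivAt (fun u : ℂ => ph n (x * u)) (ph1 n (x * y) * x) y :=
    (hasDerivAt_ph n ht1).comp y hinner2
  have hb1 : HasDerivAt (fun u : ℂ => ph1 n (u / x)) (ph2 n (y / x) * (1 / x)) y :=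
    by have := (hasDerivAt_ph1 n hs0 hs1).comp y hinner1; exact this
  have hb2 : HasDerivAt (fun u : ℂ => ph1 n (x * u)) (ph2 n (x * y) * x) y :=
    (hasDerivAt_ph1 n ht0 ht1).comp y hinner2
  have hidy : HasDerivAt (fun u : ℂ => u) (1 : ℂ) y := hasDerivAt_id y
  have hnum := (((hc2.mul hb1).mul hidy).add (((hc1.mul hb2).mul_const (x ^ 2 : ℂ)).mul
      hidy)).sub (((hc1.const_mul (n : ℂ)).mul hc2).mul_const x)
  have hpn : HasDerivAt (fun u : ℂ => u ^ n) ((n : ℂ) * y ^ n / y) y := hasDerivAt_pow_n n hy0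
  have hden := ((hpn.const_mul ((n : ℂ) + 1)).mul hidy).mul_const x
  have hden_ne : ((n : ℂ) + 1) * y ^ n * y * x ≠ 0 :=
    mul_ne_zero (mul_ne_zero (mul_ne_zero (nu_ne n) hyn) hy0) hx0
  refine ((hnum.div hden hden_ne).congr_d ?_)
  simp only [Q22, P2, Pi.mul_apply, Pi.sub_apply, Pi.add_apply]
  rw [div_eq_div_iff (pow_ne_zero 2 hden_ne)
    (mul_ne_zero (mul_ne_zero (mul_ne_zero (nu_ne n) hyn) (pow_ne_zero 2 hy0))
      (pow_ne_zero 2 hx0))]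
  field_simp
  ring

set_option maxHeartbeats 2000000 in
theorem hasDerivAt_P2x (hx0 : x ≠ 0) (hy0 : y ≠ 0) (hs1 : y / x ≠ 1) (ht1 : x * y ≠ 1) :
    HasDerivAt (fun t => P2 n t y) (Q12 n x y) x := by
  have hs0 : y / x ≠ 0 := div_ne_zero hy0 hx0
  have ht0 : x * y ≠ 0 := mul_ne_zero hx0 hy0
  have hyn : (y : ℂ) ^ n ≠ 0 := pow_ne_zero n hy0
  have hinner1 : HasDerivAt (fun t : ℂ => y / t) (-(y / x ^ 2)) x :=
    ((hasDerivAt_const x y).div (hasDerivAt_id x) hx0).congr_d (by simp only [id_eq]; ring)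
  have hinner2 : HasDerivAt (fun t : ℂ => t * y) y x := by
    simpa using (hasDerivAt_id x).mul_const y
  have hc1 : HasDerivAt (fun t : ℂ => ph n (y / t)) (ph1 n (y / x) * -(y / x ^ 2)) x :=
    (hasDerivAt_ph n hs1).comp x hinner1
  have hc2 : HasDerivAt (fun t : ℂ => ph n (t * y)) (ph1 n (x * y) * y) x :=
    by have := (hasDerivAt_ph n ht1).comp x hinner2; exact this
  have hb1 : HasDerivAt (fun t : ℂ => ph1 n (y / t)) (ph2 n (y / x) * -(y / x ^ 2)) x :=
    (hasDerivAt_ph1 n hs0 hs1).comp x hinner1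
  have hb2 : HasDerivAt (fun t : ℂ => ph1 n (t * y)) (ph2 n (x * y) * y) x :=
    by have := (hasDerivAt_ph1 n ht0 ht1).comp x hinner2; exact this
  have hx2 : HasDerivAt (fun t : ℂ => t ^ 2) ((2 : ℕ) * x ^ 1 * 1) x := (hasDerivAt_id x).pow 2
  have hidx : HasDerivAt (fun t : ℂ => t) (1 : ℂ) x := hasDerivAt_id x
  have hnum := (((hc2.mul hb1).mul_const y).add ((((hc1.mul hb2).mul hx2).mul_const
      y))).sub (((hc1.const_mul (n : ℂ)).mul hc2).mul hidx)
  have hden := hidx.const_mul (((n : ℂ) + 1) * y ^ n * y)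
  have hden_ne : ((n : ℂ) + 1) * y ^ n * y * x ≠ 0 :=
    mul_ne_zero (mul_ne_zero (mul_ne_zero (nu_ne n) hyn) hy0) hx0
  refine ((hnum.div hden hden_ne).congr_d ?_)
  simp only [Q12, P2, Pi.mul_apply, Pi.sub_apply, Pi.add_apply]
  rw [div_eq_div_iff (pow_ne_zero 2 hden_ne)
    (mul_ne_zero (mul_ne_zero (mul_ne_zero (nu_ne n) hyn) (pow_ne_zero 3 hx0)) hy0)]
  field_simp
  ring

theorem key_eq (hx0 : x ≠ 0) (hy0 : y ≠ 0) (hs1 : y / x ≠ 1) (ht1 : x * y ≠ 1) :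
    (1 - (y / x) ^ (n + 1)) * (1 - (x * y) ^ (n + 1)) /
        (((n : ℂ) + 1) * y ^ n * (1 - y / x) * (1 - x * y)) =
      ph n (y / x) * ph n (x * y) / (((n : ℂ) + 1) * y ^ n) := by
  have h1 : (1 : ℂ) - y / x ≠ 0 := sub_ne_zero.mpr (Ne.symm hs1)
  have h2 : (1 : ℂ) - x * y ≠ 0 := sub_ne_zero.mpr (Ne.symm ht1)
  have hden : ((n : ℂ) + 1) * y ^ n ≠ 0 := mul_ne_zero (nu_ne n) (pow_ne_zero n hy0)
  have e1 : ph n (y / x) * (1 - y / x) = 1 - (y / x) ^ (n + 1) := by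
    rw [ph]; exact div_mul_cancel₀ _ h1
  have e2 : ph n (x * y) * (1 - x * y) = 1 - (x * y) ^ (n + 1) := by
    rw [ph]; exact div_mul_cancel₀ _ h2
  rw [← e1, ← e2, div_eq_div_iff (mul_ne_zero (mul_ne_zero hden h1) h2) hden]
  ring

theorem hasDerivAt_f1 (hx0 : x ≠ 0) (hy0 : y ≠ 0) (hs1 : y / x ≠ 1) (ht1 : x * y ≠ 1) :
    HasDerivAt (fun t => (1 - (y / t) ^ (n + 1)) * (1 - (t * y) ^ (n + 1)) /
        (((n : ℂ) + 1) * y ^ n * (1 - y / t) * (1 - t * y))) (P1 n x y) x := by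
  refine (hasDerivAt_g1 n hx0 hy0 hs1 ht1).congr_of_eventuallyEq ?_
  have ev1 : ∀ᶠ t in 𝓝 x, t ≠ 0 := eventually_ne_nhds hx0
  have ev2 : ∀ᶠ t in 𝓝 x, y / t ≠ 1 :=
    (continuousAt_const.div continuousAt_id hx0).eventually_ne hs1
  have ev3 : ∀ᶠ t in 𝓝 x, t * y ≠ 1 :=
    (continuousAt_id.mul continuousAt_const).eventually_ne ht1
  filter_upwards [ev1, ev2, ev3] with t h1 h2 h3
  exact key_eq n h1 hy0 h2 h3

theorem hasDerivAt_f2 (hx0 : x ≠ 0) (hy0 : y ≠ 0) (hs1 : y / x ≠ 1) (ht1 : x * y ≠ 1) :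
    HasDerivAt (fun u => (1 - (u / x) ^ (n + 1)) * (1 - (x * u) ^ (n + 1)) /
        (((n : ℂ) + 1) * u ^ n * (1 - u / x) * (1 - x * u))) (P2 n x y) y := by
  refine (hasDerivAt_g2 n hx0 hy0 hs1 ht1).congr_of_eventuallyEq ?_
  have ev1 : ∀ᶠ u in 𝓝 y, u ≠ 0 := eventually_ne_nhds hy0
  have ev2 : ∀ᶠ u in 𝓝 y, u / x ≠ 1 :=
    (continuousAt_id.div continuousAt_const hx0).eventually_ne hs1
  have ev3 : ∀ᶠ u in 𝓝 y, x * u ≠ 1 :=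
    (continuousAt_const.mul continuousAt_id).eventually_ne ht1
  filter_upwards [ev1, ev2, ev3] with u h1 h2 h3
  exact key_eq n hx0 h1 h2 h3

theorem ph2_div (hx0 : x ≠ 0) (hy0 : y ≠ 0) (hs1 : y / x ≠ 1) :
    ph2 n (y / x) =
      ((n : ℂ) * ph n (y / x) * x - (2 * y - (n : ℂ) * (y - x)) * ph1 n (y / x)) * x /
        (y * (y - x)) := by
  have hs0 : y / x ≠ 0 := div_ne_zero hy0 hx0
  have hs1' : y / x - 1 ≠ 0 := sub_ne_zero.mpr hs1
  have hyx : y - x ≠ 0 := by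
    intro h
    apply hs1
    rw [sub_eq_zero] at h
    rw [h, div_self hx0]
  rw [ph2, div_eq_div_iff (mul_ne_zero hs0 hs1') (mul_ne_zero hy0 hyx)]
  field_simp

end TwoVar


theorem hcoA {x y : ℂ} (hx0 : x ≠ 0) (hy0 : y ≠ 0) (hxx : x - x⁻¹ ≠ 0) (hyy : y - y⁻¹ ≠ 0)
    (hx21 : x ^ 2 - 1 ≠ 0) (hy21 : y ^ 2 - 1 ≠ 0) :
    (2 * (x ^ 2 + 1) * (y ^ 2 + 1) - 8 * x * y) / ((x - x⁻¹) * (y - y⁻¹)) =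
      ((2 * (x ^ 2 + 1) * (y ^ 2 + 1) - 8 * x * y) * (x * y)) / ((x ^ 2 - 1) * (y ^ 2 - 1)) := by
  rw [div_eq_div_iff (mul_ne_zero hxx hyy) (mul_ne_zero hx21 hy21)]
  field_simp

theorem hcoB {x : ℂ} (hx0 : x ≠ 0) (hxx : x - x⁻¹ ≠ 0) (hx21 : x ^ 2 - 1 ≠ 0) :
    (3 * x ^ 2 + 1) / (x - x⁻¹) = ((3 * x ^ 2 + 1) * x) / (x ^ 2 - 1) := by
  rw [div_eq_div_iff hxx hx21]
  field_simp

theorem assemble (x y N Y A1 A2 A3 A4 A5 R cA cB cC : ℂ)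
    (hN : N ≠ 0) (hY : Y ≠ 0) (hx0 : x ≠ 0) (hy0 : y ≠ 0)
    (hx21 : x ^ 2 - 1 ≠ 0) (hy21 : y ^ 2 - 1 ≠ 0)
    (key : x ^ 2 * A1 * (y ^ 2 * ((x ^ 2 - 1) * (y ^ 2 - 1))) +
        y ^ 2 * A2 * (x ^ 2 * ((x ^ 2 - 1) * (y ^ 2 - 1))) +
        cA * (x * y) * A3 * (x * y) +
        cB * x * A4 * (x ^ 2 * y ^ 2 * (y ^ 2 - 1)) +
        cC * y * A5 * (x ^ 3 * y * (x ^ 2 - 1)) +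
        R * (x ^ 4 * y ^ 2 * ((x ^ 2 - 1) * (y ^ 2 - 1))) =
        N ^ 2 * R * (x ^ 4 * y ^ 2 * ((x ^ 2 - 1) * (y ^ 2 - 1)))) :
    x ^ 2 * (A1 / (N * Y * x ^ 4)) + y ^ 2 * (A2 / (N * Y * y ^ 2 * x ^ 2)) +
      (cA * (x * y)) / ((x ^ 2 - 1) * (y ^ 2 - 1)) * (A3 / (N * Y * x ^ 3 * y)) +
      (cB * x) / (x ^ 2 - 1) * (A4 / (N * Y * x ^ 2)) +
      (cC * y) / (y ^ 2 - 1) * (A5 / (N * Y * y * x)) + R / (N * Y) =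
      N ^ 2 * (R / (N * Y)) := by
  have hNY : N * Y ≠ 0 := mul_ne_zero hN hY
  have hDD : N * Y * x ^ 4 * y ^ 2 * ((x ^ 2 - 1) * (y ^ 2 - 1)) ≠ 0 :=
    mul_ne_zero (mul_ne_zero (mul_ne_zero hNY (pow_ne_zero 4 hx0)) (pow_ne_zero 2 hy0))
      (mul_ne_zero hx21 hy21)
  have e1 : x ^ 2 * (A1 / (N * Y * x ^ 4)) =
      (x ^ 2 * A1 * (y ^ 2 * ((x ^ 2 - 1) * (y ^ 2 - 1)))) /
        (N * Y * x ^ 4 * y ^ 2 * ((x ^ 2 - 1) * (y ^ 2 - 1))) := by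
    rw [mul_div_assoc', div_eq_div_iff (mul_ne_zero hNY (pow_ne_zero 4 hx0)) hDD]; ring
  have e2 : y ^ 2 * (A2 / (N * Y * y ^ 2 * x ^ 2)) =
      (y ^ 2 * A2 * (x ^ 2 * ((x ^ 2 - 1) * (y ^ 2 - 1)))) /
        (N * Y * x ^ 4 * y ^ 2 * ((x ^ 2 - 1) * (y ^ 2 - 1))) := by
    rw [mul_div_assoc', div_eq_div_iff (mul_ne_zero (mul_ne_zero hNY (pow_ne_zero 2 hy0))
      (pow_ne_zero 2 hx0)) hDD]; ring
  have e3 : (cA * (x * y)) / ((x ^ 2 - 1) * (y ^ 2 - 1)) * (A3 / (N * Y * x ^ 3 * y)) =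
      (cA * (x * y) * A3 * (x * y)) /
        (N * Y * x ^ 4 * y ^ 2 * ((x ^ 2 - 1) * (y ^ 2 - 1))) := by
    rw [div_mul_div_comm, div_eq_div_iff (mul_ne_zero (mul_ne_zero hx21 hy21)
      (mul_ne_zero (mul_ne_zero hNY (pow_ne_zero 3 hx0)) hy0)) hDD]; ring
  have e4 : (cB * x) / (x ^ 2 - 1) * (A4 / (N * Y * x ^ 2)) =
      (cB * x * A4 * (x ^ 2 * y ^ 2 * (y ^ 2 - 1))) /
        (N * Y * x ^ 4 * y ^ 2 * ((x ^ 2 - 1) * (y ^ 2 - 1))) := by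
    rw [div_mul_div_comm, div_eq_div_iff (mul_ne_zero hx21
      (mul_ne_zero hNY (pow_ne_zero 2 hx0))) hDD]; ring
  have e5 : (cC * y) / (y ^ 2 - 1) * (A5 / (N * Y * y * x)) =
      (cC * y * A5 * (x ^ 3 * y * (x ^ 2 - 1))) /
        (N * Y * x ^ 4 * y ^ 2 * ((x ^ 2 - 1) * (y ^ 2 - 1))) := by
    rw [div_mul_div_comm, div_eq_div_iff (mul_ne_zero hy21
      (mul_ne_zero (mul_ne_zero hNY hy0) hx0)) hDD]; ring
  have e6 : R / (N * Y) =
      (R * (x ^ 4 * y ^ 2 * ((x ^ 2 - 1) * (y ^ 2 - 1)))) /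
        (N * Y * x ^ 4 * y ^ 2 * ((x ^ 2 - 1) * (y ^ 2 - 1))) := by
    rw [div_eq_div_iff hNY hDD]; ring
  have e7 : N ^ 2 * (R / (N * Y)) =
      (N ^ 2 * R * (x ^ 4 * y ^ 2 * ((x ^ 2 - 1) * (y ^ 2 - 1)))) /
        (N * Y * x ^ 4 * y ^ 2 * ((x ^ 2 - 1) * (y ^ 2 - 1))) := by
    rw [mul_div_assoc', div_eq_div_iff hNY hDD]; ring
  rw [e1, e2, e3, e4, e5, e7, e6, ← add_div, ← add_div, ← add_div,
    ← add_div, ← add_div, key]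


set_option maxHeartbeats 4000000 in
/-- For a fixed nonnegative integer `n`, the function
`g(x,y) = (1 − (y/x)^{n+1})(1 − (xy)^{n+1}) / ((n+1)·y^n·(1 − y/x)(1 − xy))`
satisfies `D g = (n+1)² g` at every point with `x, y ∉ {0,1,−1}`, `y ≠ x`,
`x·y ≠ 1`. -/
theorem Dop_eigenfunction (n : ℕ) (x y : ℂ)
    (hx : x ≠ 0 ∧ x ≠ 1 ∧ x ≠ -1) (hy : y ≠ 0 ∧ y ≠ 1 ∧ y ≠ -1)
    (hxy : y ≠ x) (hxy1 : x * y ≠ 1) :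
    Dop (fun x y : ℂ =>
        (1 - (y / x) ^ (n + 1)) * (1 - (x * y) ^ (n + 1)) /
          (((n : ℂ) + 1) * y ^ n * (1 - y / x) * (1 - x * y))) x y =
      ((n : ℂ) + 1) ^ 2 *
        ((1 - (y / x) ^ (n + 1)) * (1 - (x * y) ^ (n + 1)) /
          (((n : ℂ) + 1) * y ^ n * (1 - y / x) * (1 - x * y))) := by
  obtain ⟨hx0, hx1, hxm1⟩ := hx
  obtain ⟨hy0, hy1, hym1⟩ := hy
  have hs1 : y / x ≠ 1 := by
    intro h
    rw [div_eq_one_iff_eq hx0] at h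
    exact hxy h
  have ht1 : x * y ≠ 1 := hxy1
  have hyn : (y : ℂ) ^ n ≠ 0 := pow_ne_zero n hy0
  have ev1 : ∀ᶠ t in 𝓝 x, t ≠ 0 := eventually_ne_nhds hx0
  have ev2 : ∀ᶠ t in 𝓝 x, y / t ≠ 1 :=
    (continuousAt_const.div continuousAt_id hx0).eventually_ne hs1
  have ev3 : ∀ᶠ t in 𝓝 x, t * y ≠ 1 :=
    (continuousAt_id.mul continuousAt_const).eventually_ne ht1
  have eu1 : ∀ᶠ u in 𝓝 y, u ≠ 0 := eventually_ne_nhds hy0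
  have eu2 : ∀ᶠ u in 𝓝 y, u / x ≠ 1 :=
    (continuousAt_id.div continuousAt_const hx0).eventually_ne hs1
  have eu3 : ∀ᶠ u in 𝓝 y, x * u ≠ 1 :=
    (continuousAt_const.mul continuousAt_id).eventually_ne ht1
  set F : ℂ → ℂ → ℂ := fun x y : ℂ =>
    (1 - (y / x) ^ (n + 1)) * (1 - (x * y) ^ (n + 1)) /
      (((n : ℂ) + 1) * y ^ n * (1 - y / x) * (1 - x * y)) with hF
  have hf1 : ∀ {a b : ℂ}, a ≠ 0 → b ≠ 0 → b / a ≠ 1 → a * b ≠ 1 →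
      HasDerivAt (fun t => F t b) (P1 n a b) a :=
    fun h1 h2 h3 h4 => hasDerivAt_f1 n h1 h2 h3 h4
  have hf2 : ∀ {a b : ℂ}, a ≠ 0 → b ≠ 0 → b / a ≠ 1 → a * b ≠ 1 →
      HasDerivAt (fun u => F a u) (P2 n a b) b :=
    fun h1 h2 h3 h4 => hasDerivAt_f2 n h1 h2 h3 h4
  have E1 : p1 F x y = P1 n x y := (hf1 hx0 hy0 hs1 ht1).deriv
  have E2 : p2 F x y = P2 n x y := (hf2 hx0 hy0 hs1 ht1).deriv
  have E11 : p1 (p1 F) x y = Q11 n x y := by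
    show deriv (fun t => p1 F t y) x = _
    have hev : (fun t => p1 F t y) =ᶠ[𝓝 x] (fun t => P1 n t y) := by
      filter_upwards [ev1, ev2, ev3] with t h1 h2 h3
      exact (hf1 h1 hy0 h2 h3).deriv
    rw [hev.deriv_eq]
    exact (hasDerivAt_P1x n hx0 hy0 hs1 ht1).deriv
  have E22 : p2 (p2 F) x y = Q22 n x y := by
    show deriv (fun u => p2 F x u) y = _
    have hev : (fun u => p2 F x u) =ᶠ[𝓝 y] (fun u => P2 n x u) := by
      filter_upwards [eu1, eu2, eu3] with u h1 h2 h3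
      exact (hf2 hx0 h1 h2 h3).deriv
    rw [hev.deriv_eq]
    exact (hasDerivAt_P2y n hx0 hy0 hs1 ht1).deriv
  have E12 : p1 (p2 F) x y = Q12 n x y := by
    show deriv (fun t => p2 F t y) x = _
    have hev : (fun t => p2 F t y) =ᶠ[𝓝 x] (fun t => P2 n t y) := by
      filter_upwards [ev1, ev2, ev3] with t h1 h2 h3
      exact (hf2 h1 hy0 h2 h3).deriv
    rw [hev.deriv_eq]
    exact (hasDerivAt_P2x n hx0 hy0 hs1 ht1).deriv
  have EF : F x y = ph n (y / x) * ph n (x * y) / (((n : ℂ) + 1) * y ^ n) :=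
    key_eq n hx0 hy0 hs1 ht1
  have hyx : y - x ≠ 0 := sub_ne_zero.mpr hxy
  have hty : x * y - 1 ≠ 0 := sub_ne_zero.mpr hxy1
  have hx21 : x ^ 2 - 1 ≠ 0 := by
    have h : x ^ 2 - 1 = (x - 1) * (x + 1) := by ring
    rw [h]
    exact mul_ne_zero (sub_ne_zero.mpr hx1)
      (fun h' => hxm1 (eq_neg_of_add_eq_zero_left h'))
  have hy21 : y ^ 2 - 1 ≠ 0 := by
    have h : y ^ 2 - 1 = (y - 1) * (y + 1) := by ring
    rw [h]
    exact mul_ne_zero (sub_ne_zero.mpr hy1)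
      (fun h' => hym1 (eq_neg_of_add_eq_zero_left h'))
  have hxx : x - x⁻¹ ≠ 0 := by
    intro h
    apply hx21
    have h2 : x * (x - x⁻¹) = x ^ 2 - 1 := by field_simp
    rw [h, mul_zero] at h2
    exact h2.symm
  have hyy : y - y⁻¹ ≠ 0 := by
    intro h
    apply hy21
    have h2 : y * (y - y⁻¹) = y ^ 2 - 1 := by field_simp
    rw [h, mul_zero] at h2
    exact h2.symm
  have hq1 : y * (y - x) ≠ 0 := mul_ne_zero hy0 hyx
  have hq2 : (x * y) * (x * y - 1) ≠ 0 := mul_ne_zero (mul_ne_zero hx0 hy0) hty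
  have hc1 : ph2 n (y / x) * (y * (y - x)) =
      ((n : ℂ) * ph n (y / x) * x - (2 * y - (n : ℂ) * (y - x)) * ph1 n (y / x)) * x := by
    rw [ph2_div n hx0 hy0 hs1, div_mul_cancel₀ _ hq1]
  have hc2 : ph2 n (x * y) * ((x * y) * (x * y - 1)) =
      (n : ℂ) * ph n (x * y) - (2 * (x * y) - (n : ℂ) * (x * y - 1)) * ph1 n (x * y) := by
    rw [ph2, div_mul_cancel₀ _ hq2]
  rw [Dop, E1, E2, E11, E22, E12, EF, key_eq n hx0 hy0 hs1 ht1,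
    hcoA hx0 hy0 hxx hyy hx21 hy21, hcoB hx0 hxx hx21, hcoB hy0 hyy hy21]
  simp only [Q11, Q22, Q12, P1, P2]
  refine assemble x y ((n : ℂ) + 1) (y ^ n) _ _ _ _ _ _ _ _ _
    (nu_ne n) hyn hx0 hy0 hx21 hy21 ?_
  linear_combination (-4 * ph n (x * y) * x ^ 2 * y ^ 3 * (y - x)) * hc1 +
    (4 * ph n (y / x) * x ^ 5 * y ^ 3 * (x * y - 1)) * hc2
end

section
/- For all nonnegative integers u, v and all x, y ∈ ℂ∖{0, 1, −1}: D[(x+x^{−1})^u·(y+y^{−1})^v] = (u+v+1)²·(x+x^{−1})^u·(y+y^{−1})^v − 4·u·(u−1)·(x+x^{−1})^{u−2}·(y+y^{−1})^v − 8·u·v·(x+x^{−1})^{u−1}·(y+y^{−1})^{v−1} − 4·v·(v−1)·(x+x^{−1})^u·(y+y^{−1})^{v−2}, where any term whose integer coefficient u(u−1), uv, or v(v−1) vanishes is interpreted as 0 (so no negative powers of x+x^{−1} or y+y^{−1} actually occur). -/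
open Filter

lemma diffA {x : ℂ} (hx : x ≠ 0) : DifferentiableAt ℂ (fun t : ℂ => t + t⁻¹) x :=
  differentiableAt_fun_id.add (differentiableAt_inv hx)

lemma dA {x : ℂ} (hx : x ≠ 0) : deriv (fun t : ℂ => t + t⁻¹) x = 1 - (x ^ 2)⁻¹ := by
  rw [deriv_fun_add differentiableAt_fun_id (differentiableAt_inv hx), deriv_id'', deriv_inv]; ring

lemma diffH {x : ℂ} (hx : x ≠ 0) : DifferentiableAt ℂ (fun t : ℂ => 1 - (t ^ 2)⁻¹) x :=
  (differentiableAt_const 1).sub ((differentiableAt_pow 2).inv (pow_ne_zero 2 hx))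

lemma dH {x : ℂ} (hx : x ≠ 0) :
    deriv (fun t : ℂ => 1 - (t ^ 2)⁻¹) x = 2 * x / (x ^ 2) ^ 2 := by
  rw [deriv_const_sub, deriv_fun_inv'' (c := fun t : ℂ => t ^ 2) (differentiableAt_pow 2) (pow_ne_zero 2 hx), deriv_pow_field]
  ring

lemma dP (u : ℕ) {x : ℂ} (hx : x ≠ 0) :
    deriv (fun t : ℂ => (t + t⁻¹) ^ u) x = u * (x + x⁻¹) ^ (u - 1) * (1 - (x ^ 2)⁻¹) := by
  rw [deriv_fun_pow (diffA hx) _, dA hx]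

lemma diffQ (u : ℕ) {x : ℂ} (hx : x ≠ 0) :
    DifferentiableAt ℂ (fun t : ℂ => (u : ℂ) * (t + t⁻¹) ^ (u - 1) * (1 - (t ^ 2)⁻¹)) x :=
  (((differentiableAt_const _).mul ((diffA hx).pow _)).mul (diffH hx))

lemma dP2 (u : ℕ) {x : ℂ} (hx : x ≠ 0) :
    deriv (fun t : ℂ => (u : ℂ) * (t + t⁻¹) ^ (u - 1) * (1 - (t ^ 2)⁻¹)) x =
      (u : ℂ) * ((u - 1 : ℕ) : ℂ) * (x + x⁻¹) ^ (u - 1 - 1) * (1 - (x ^ 2)⁻¹) ^ 2 +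
        (u : ℂ) * (x + x⁻¹) ^ (u - 1) * (2 * x / (x ^ 2) ^ 2) := by
  rw [deriv_fun_mul ((differentiableAt_const _).fun_mul ((diffA hx).fun_pow _)) (diffH hx),
    deriv_const_mul _ ((diffA hx).fun_pow _), deriv_fun_pow (diffA hx) _, dA hx, dH hx]
  ring

lemma Dop_eval (u v : ℕ) {x y : ℂ} (hx : x ≠ 0) (hy : y ≠ 0) :
    Dop (fun x y : ℂ => (x + x⁻¹) ^ u * (y + y⁻¹) ^ v) x y =
      x ^ 2 * (((u : ℂ) * ((u - 1 : ℕ) : ℂ) * (x + x⁻¹) ^ (u - 1 - 1) * (1 - (x ^ 2)⁻¹) ^ 2 +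
          (u : ℂ) * (x + x⁻¹) ^ (u - 1) * (2 * x / (x ^ 2) ^ 2)) * (y + y⁻¹) ^ v) +
      y ^ 2 * ((x + x⁻¹) ^ u * ((v : ℂ) * ((v - 1 : ℕ) : ℂ) * (y + y⁻¹) ^ (v - 1 - 1) * (1 - (y ^ 2)⁻¹) ^ 2 +
          (v : ℂ) * (y + y⁻¹) ^ (v - 1) * (2 * y / (y ^ 2) ^ 2))) +
      ((2 * (x ^ 2 + 1) * (y ^ 2 + 1) - 8 * x * y) / ((x - x⁻¹) * (y - y⁻¹))) *
        ((u : ℂ) * (x + x⁻¹) ^ (u - 1) * (1 - (x ^ 2)⁻¹) *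
          ((v : ℂ) * (y + y⁻¹) ^ (v - 1) * (1 - (y ^ 2)⁻¹))) +
      ((3 * x ^ 2 + 1) / (x - x⁻¹)) *
        ((u : ℂ) * (x + x⁻¹) ^ (u - 1) * (1 - (x ^ 2)⁻¹) * (y + y⁻¹) ^ v) +
      ((3 * y ^ 2 + 1) / (y - y⁻¹)) *
        ((x + x⁻¹) ^ u * ((v : ℂ) * (y + y⁻¹) ^ (v - 1) * (1 - (y ^ 2)⁻¹))) +
      (x + x⁻¹) ^ u * (y + y⁻¹) ^ v := by
  have hBv : ∀ t : ℂ, deriv (fun s => (t + t⁻¹) ^ u * (s + s⁻¹) ^ v) y =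
      (t + t⁻¹) ^ u * ((v : ℂ) * (y + y⁻¹) ^ (v - 1) * (1 - (y ^ 2)⁻¹)) := by
    intro t
    rw [deriv_const_mul _ ((diffA hy).fun_pow v), deriv_fun_pow (diffA hy) _, dA hy]
  have hAu : ∀ t : ℂ, t ≠ 0 → deriv (fun s : ℂ => (s + s⁻¹) ^ u * (y + y⁻¹) ^ v) t =
      (t : ℂ) ^ 0 * ((u : ℂ) * (t + t⁻¹) ^ (u - 1) * (1 - (t ^ 2)⁻¹)) * (y + y⁻¹) ^ v := by
    intro t ht
    rw [deriv_mul_const ((diffA ht).fun_pow u), deriv_fun_pow (diffA ht) _, dA ht]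
    ring
  unfold Dop p1 p2
  -- p1 f
  have e1 : deriv (fun t : ℂ => (t + t⁻¹) ^ u * (y + y⁻¹) ^ v) x =
      (u : ℂ) * (x + x⁻¹) ^ (u - 1) * (1 - (x ^ 2)⁻¹) * (y + y⁻¹) ^ v := by
    rw [deriv_mul_const ((diffA hx).fun_pow u), deriv_fun_pow (diffA hx) _, dA hx]
  -- p2 f
  have e2 : deriv (fun s : ℂ => (x + x⁻¹) ^ u * (s + s⁻¹) ^ v) y =
      (x + x⁻¹) ^ u * ((v : ℂ) * (y + y⁻¹) ^ (v - 1) * (1 - (y ^ 2)⁻¹)) := hBv x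
  -- p1 p1
  have e11 : deriv (fun t : ℂ => deriv (fun s : ℂ => (s + s⁻¹) ^ u * (y + y⁻¹) ^ v) t) x =
      ((u : ℂ) * ((u - 1 : ℕ) : ℂ) * (x + x⁻¹) ^ (u - 1 - 1) * (1 - (x ^ 2)⁻¹) ^ 2 +
        (u : ℂ) * (x + x⁻¹) ^ (u - 1) * (2 * x / (x ^ 2) ^ 2)) * (y + y⁻¹) ^ v := by
    have he : (fun t : ℂ => deriv (fun s : ℂ => (s + s⁻¹) ^ u * (y + y⁻¹) ^ v) t) =ᶠ[nhds x]
        (fun t : ℂ => (u : ℂ) * (t + t⁻¹) ^ (u - 1) * (1 - (t ^ 2)⁻¹) * (y + y⁻¹) ^ v) := by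
      filter_upwards [eventually_ne_nhds hx] with t ht
      have := hAu t ht
      simpa using this
    rw [he.deriv_eq, deriv_mul_const (diffQ u hx), dP2 u hx]
  -- p2 p2
  have e22 : deriv (fun s : ℂ => deriv (fun s' : ℂ => (x + x⁻¹) ^ u * (s' + s'⁻¹) ^ v) s) y =
      (x + x⁻¹) ^ u * ((v : ℂ) * ((v - 1 : ℕ) : ℂ) * (y + y⁻¹) ^ (v - 1 - 1) * (1 - (y ^ 2)⁻¹) ^ 2 +
        (v : ℂ) * (y + y⁻¹) ^ (v - 1) * (2 * y / (y ^ 2) ^ 2)) := by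
    have he : (fun s : ℂ => deriv (fun s' : ℂ => (x + x⁻¹) ^ u * (s' + s'⁻¹) ^ v) s) =ᶠ[nhds y]
        (fun s : ℂ => (x + x⁻¹) ^ u * ((v : ℂ) * (s + s⁻¹) ^ (v - 1) * (1 - (s ^ 2)⁻¹))) := by
      filter_upwards [eventually_ne_nhds hy] with s hs
      rw [deriv_const_mul _ ((diffA hs).fun_pow v), deriv_fun_pow (diffA hs) _, dA hs]
    rw [he.deriv_eq, deriv_const_mul _ (diffQ v hy), dP2 v hy]
  -- p1 p2
  have e12 : deriv (fun t : ℂ => deriv (fun s : ℂ => (t + t⁻¹) ^ u * (s + s⁻¹) ^ v) y) x =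
      (u : ℂ) * (x + x⁻¹) ^ (u - 1) * (1 - (x ^ 2)⁻¹) *
        ((v : ℂ) * (y + y⁻¹) ^ (v - 1) * (1 - (y ^ 2)⁻¹)) := by
    have he : (fun t : ℂ => deriv (fun s : ℂ => (t + t⁻¹) ^ u * (s + s⁻¹) ^ v) y) =
        (fun t : ℂ => (t + t⁻¹) ^ u * ((v : ℂ) * (y + y⁻¹) ^ (v - 1) * (1 - (y ^ 2)⁻¹))) := by
      funext t; exact hBv t
    rw [he, deriv_mul_const ((diffA hx).fun_pow u), deriv_fun_pow (diffA hx) _, dA hx]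
  rw [e1, e2, e11, e22, e12]


lemma L1_s16 (u : ℕ) {x : ℂ} (hx0 : x ≠ 0) (hx21 : x ^ 2 - 1 ≠ 0) :
    x ^ 2 * ((u : ℂ) * ((u - 1 : ℕ) : ℂ) * (x + x⁻¹) ^ (u - 1 - 1) * (1 - (x ^ 2)⁻¹) ^ 2 +
        (u : ℂ) * (x + x⁻¹) ^ (u - 1) * (2 * x / (x ^ 2) ^ 2)) +
      ((3 * x ^ 2 + 1) / (x - x⁻¹)) * ((u : ℂ) * (x + x⁻¹) ^ (u - 1) * (1 - (x ^ 2)⁻¹)) =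
    ((u : ℂ) ^ 2 + 2 * u) * (x + x⁻¹) ^ u - 4 * ((u * (u - 1) : ℕ) : ℂ) * (x + x⁻¹) ^ (u - 2) := by
  have hxs : x - x⁻¹ = (x ^ 2 - 1) / x := by field_simp
  have hxa : x + x⁻¹ = (x ^ 2 + 1) / x := by field_simp
  have hx1' : 1 - (x ^ 2)⁻¹ = (x ^ 2 - 1) / x ^ 2 := by field_simp
  have hx2' : 2 * x / (x ^ 2) ^ 2 = 2 / x ^ 3 := by
    rw [div_eq_div_iff (pow_ne_zero 2 (pow_ne_zero 2 hx0)) (pow_ne_zero 3 hx0)]; ring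
  have hkey : (3 * x ^ 2 + 1) / (x - x⁻¹) * (1 - (x ^ 2)⁻¹) = (3 * x ^ 2 + 1) / x := by
    rw [hxs, hx1', div_div_eq_mul_div, div_mul_div_comm,
      div_eq_div_iff (mul_ne_zero hx21 (pow_ne_zero 2 hx0)) hx0]
    ring
  have hterm : ∀ c C : ℂ, (3 * x ^ 2 + 1) / (x - x⁻¹) * (c * C * (1 - (x ^ 2)⁻¹)) =
      c * C * ((3 * x ^ 2 + 1) / x) := by
    intro c C
    rw [← hkey]; ring
  rw [hterm]
  rcases u with _ | _ | n
  · simp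
  · push_cast
    simp only [Nat.sub_self, pow_zero, Nat.zero_sub, pow_one]
    rw [hxa, hx1', hx2']
    field_simp
    try simp only [inv_pow]
    try field_simp
    ring
  · push_cast
    try simp only [Nat.add_sub_cancel, Nat.succ_sub_one]
    rw [hxa, hx1', hx2']
    simp only [pow_succ ((x ^ 2 + 1) / x)]
    generalize ((x ^ 2 + 1) / x) ^ n = A
    rw [← sub_eq_zero]
    field_simp
    have hp : x ^ 10 * x⁻¹ ^ 10 = 1 := by
      rw [← mul_pow, mul_inv_cancel₀ hx0, one_pow]
    linear_combination

lemma L2_s16 (u v : ℕ) {x y : ℂ} (hx0 : x ≠ 0) (hy0 : y ≠ 0)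
    (hx21 : x ^ 2 - 1 ≠ 0) (hy21 : y ^ 2 - 1 ≠ 0) :
    ((2 * (x ^ 2 + 1) * (y ^ 2 + 1) - 8 * x * y) / ((x - x⁻¹) * (y - y⁻¹))) *
        ((u : ℂ) * (x + x⁻¹) ^ (u - 1) * (1 - (x ^ 2)⁻¹) *
          ((v : ℂ) * (y + y⁻¹) ^ (v - 1) * (1 - (y ^ 2)⁻¹))) =
      2 * (u : ℂ) * (v : ℂ) * (x + x⁻¹) ^ u * (y + y⁻¹) ^ v -
        8 * ((u * v : ℕ) : ℂ) * (x + x⁻¹) ^ (u - 1) * (y + y⁻¹) ^ (v - 1) := by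
  have hxs : x - x⁻¹ = (x ^ 2 - 1) / x := by field_simp
  have hys : y - y⁻¹ = (y ^ 2 - 1) / y := by field_simp
  have hxa : x + x⁻¹ = (x ^ 2 + 1) / x := by field_simp
  have hya : y + y⁻¹ = (y ^ 2 + 1) / y := by field_simp
  have hx1' : 1 - (x ^ 2)⁻¹ = (x ^ 2 - 1) / x ^ 2 := by field_simp
  have hy1' : 1 - (y ^ 2)⁻¹ = (y ^ 2 - 1) / y ^ 2 := by field_simp
  have hkey : (2 * (x ^ 2 + 1) * (y ^ 2 + 1) - 8 * x * y) / ((x - x⁻¹) * (y - y⁻¹)) *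
      ((1 - (x ^ 2)⁻¹) * (1 - (y ^ 2)⁻¹)) =
      (2 * (x ^ 2 + 1) * (y ^ 2 + 1) - 8 * x * y) / (x * y) := by
    rw [hxs, hys, hx1', hy1', div_mul_div_comm, div_mul_div_comm, div_div_eq_mul_div,
      div_mul_div_comm,
      div_eq_div_iff (mul_ne_zero (mul_ne_zero hx21 hy21)
        (mul_ne_zero (pow_ne_zero 2 hx0) (pow_ne_zero 2 hy0))) (mul_ne_zero hx0 hy0)]
    ring
  have hterm : ∀ c C d D : ℂ,
      (2 * (x ^ 2 + 1) * (y ^ 2 + 1) - 8 * x * y) / ((x - x⁻¹) * (y - y⁻¹)) *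
        (c * C * (1 - (x ^ 2)⁻¹) * (d * D * (1 - (y ^ 2)⁻¹))) =
      c * C * (d * D) * ((2 * (x ^ 2 + 1) * (y ^ 2 + 1) - 8 * x * y) / (x * y)) := by
    intro c C d D
    rw [← hkey]; ring
  rw [hterm]
  rcases u with _ | n
  · simp
  · rcases v with _ | m
    · simp
    · push_cast
      try simp only [Nat.add_sub_cancel, Nat.succ_sub_one]
      rw [hxa, hya]
      simp only [pow_succ ((x ^ 2 + 1) / x), pow_succ ((y ^ 2 + 1) / y)]
      generalize ((x ^ 2 + 1) / x) ^ n = A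
      generalize ((y ^ 2 + 1) / y) ^ m = B
      field_simp
      try simp only [inv_pow]
      try field_simp

/-- For all nonnegative integers `u, v` and all
`x, y ∉ {0,1,−1}`:
`D[(x+x⁻¹)^u (y+y⁻¹)^v] = (u+v+1)²(x+x⁻¹)^u(y+y⁻¹)^v
 − 4u(u−1)(x+x⁻¹)^{u−2}(y+y⁻¹)^v − 8uv(x+x⁻¹)^{u−1}(y+y⁻¹)^{v−1}
 − 4v(v−1)(x+x⁻¹)^u(y+y⁻¹)^{v−2}`,
where any term whose integer coefficient `u(u−1)`, `uv` or `v(v−1)` vanishes is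
interpreted as `0` (here realized via truncated subtraction of natural number
exponents, which only occurs when the corresponding coefficient is zero). -/
theorem Dop_on_power_basis (u v : ℕ) (x y : ℂ)
    (hx : x ≠ 0 ∧ x ≠ 1 ∧ x ≠ -1) (hy : y ≠ 0 ∧ y ≠ 1 ∧ y ≠ -1) :
    Dop (fun x y : ℂ => (x + x⁻¹) ^ u * (y + y⁻¹) ^ v) x y =
      ((u : ℂ) + v + 1) ^ 2 * (x + x⁻¹) ^ u * (y + y⁻¹) ^ v -
        4 * ((u * (u - 1) : ℕ) : ℂ) * (x + x⁻¹) ^ (u - 2) * (y + y⁻¹) ^ v -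
        8 * ((u * v : ℕ) : ℂ) * (x + x⁻¹) ^ (u - 1) * (y + y⁻¹) ^ (v - 1) -
        4 * ((v * (v - 1) : ℕ) : ℂ) * (x + x⁻¹) ^ u * (y + y⁻¹) ^ (v - 2) := by
  obtain ⟨hx0, hx1, hxm⟩ := hx
  obtain ⟨hy0, hy1, hym⟩ := hy
  have hx21 : x ^ 2 - 1 ≠ 0 := by
    intro h
    rcases mul_eq_zero.mp (show (x - 1) * (x + 1) = 0 by linear_combination h) with h2 | h2
    · exact hx1 (by linear_combination h2)
    · exact hxm (by linear_combination h2)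
  have hy21 : y ^ 2 - 1 ≠ 0 := by
    intro h
    rcases mul_eq_zero.mp (show (y - 1) * (y + 1) = 0 by linear_combination h) with h2 | h2
    · exact hy1 (by linear_combination h2)
    · exact hym (by linear_combination h2)
  rw [Dop_eval u v hx0 hy0]
  linear_combination (y + y⁻¹) ^ v * L1_s16 u hx0 hx21 + (x + x⁻¹) ^ u * L1_s16 v hy0 hy21 +
    L2_s16 u v hx0 hy0 hx21 hy21
end
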